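/- arXiv:1508.01336 — 2 statements merged into one kernel-verified Lean document; each statement's English description precedes it below -/
import Mathlib

section
/- Let E be a closed subset of the unit circle T. Then E is porous if and only if there exists a constant C > 0 such that for every dyadic arc J one has Σ_{I ∈ E(J)} |I| ≤ C|J|, where E(J) is the family of dyadic arcs I ⊂ J such that I ∩ E ≠ ∅. -/
open Complex MeasureTheory Set Filter Topology
open scoped ENNReal NNReal Real

noncomputable section

namespace WEPPaper

/-- The open unit disc `𝔻` in `ℂ`. -/
def disc : Set ℂ := {z : ℂ | ‖z‖ < 1}

/-- The unit circle `𝕋` in `ℂ`. -/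
def circleSet : Set ℂ := {z : ℂ | ‖z‖ = 1}

/-- The point of the unit circle at angle `θ`. -/
def ePt (θ : ℝ) : ℂ := Complex.exp ((θ : ℂ) * Complex.I)

/-- Normalised arclength measure on the unit circle (total mass `1`, i.e. `|𝕋| = 1`). -/
def circleMeasure : Measure ℂ :=
  (ENNReal.ofReal (2 * Real.pi))⁻¹ •
    (volume.restrict (Set.Ico (0 : ℝ) (2 * Real.pi))).map ePt

/-- The (half-open) arc of the circle with left endpoint at angle `a` and normalised
length `t` (so angular length `2πt`). -/
def arc (a t : ℝ) : Set ℂ := ePt '' Set.Ico a (a + 2 * Real.pi * t)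

/-- The corresponding open arc. -/
def arcInt (a t : ℝ) : Set ℂ := ePt '' Set.Ioo a (a + 2 * Real.pi * t)

/-- The point `z(J) = (1 - (3/4)|J|) ξ_J` associated to the arc with left endpoint
angle `a` and normalised length `t` (its centre is at angle `a + πt`). -/
def zpt (a t : ℝ) : ℂ := ((1 : ℂ) - (3 / 4 : ℝ) * t) * ePt (a + Real.pi * t)

/-- Left endpoint angle of the dyadic arc `[2π k 2⁻ⁿ, 2π (k+1) 2⁻ⁿ)`. -/
def dyA (n k : ℕ) : ℝ := 2 * Real.pi * k * ((2 : ℝ) ^ n)⁻¹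

/-- Normalised length `2⁻ⁿ` of a dyadic arc of generation `n`. -/
def dyL (n : ℕ) : ℝ := ((2 : ℝ) ^ n)⁻¹

/-- The dyadic arc `[2π k 2⁻ⁿ, 2π (k+1) 2⁻ⁿ)` on the circle. -/
def dyadicArc (n k : ℕ) : Set ℂ := arc (dyA n k) (dyL n)

/-- The interior (relative to the circle) of the dyadic arc. -/
def dyadicArcInt (n k : ℕ) : Set ℂ := arcInt (dyA n k) (dyL n)

/-- The point `z(J)` for the dyadic arc `J` indexed by `(n, k)`. -/
def zdy (n k : ℕ) : ℂ := zpt (dyA n k) (dyL n)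

/-- Normalised length of a subset of the circle. -/
def len (S : Set ℂ) : ℝ := (circleMeasure S).toReal

/-- The collection of connected components of a subset `U` of `ℂ`. -/
def components (U : Set ℂ) : Set (Set ℂ) := {V | ∃ x ∈ U, V = connectedComponentIn U x}

/-- A closed subset `E` of the circle has finite entropy if
`Σ |J_k| log (1/|J_k|) < ∞`, the sum being over the connected components `J_k`
of `𝕋 \ E`. -/
def FiniteEntropy (E : Set ℂ) : Prop :=
  ∃ M : ℝ, ∀ F : Finset (Set ℂ), (↑F : Set (Set ℂ)) ⊆ components (circleSet \ E) →
    ∑ V ∈ F, len V * Real.log (1 / len V) ≤ M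

/-- The pseudohyperbolic distance `ρ(z,w) = |(z-w)/(1-conj w · z)|`. -/
def pdist (z w : ℂ) : ℝ := ‖(z - w) / (1 - (starRingEnd ℂ) w * z)‖

/-- The pseudohyperbolic distance from a point to a set (`⊤` for the empty set). -/
def pdistSet (z : ℂ) (S : Set ℂ) : ℝ≥0∞ := ⨅ w ∈ S, ENNReal.ofReal (pdist z w)

/-- The zero set of `f` in the unit disc. -/
def zeroSet (f : ℂ → ℂ) : Set ℂ := {z ∈ disc | f z = 0}

/-- `f ∈ H^∞`: `f` is bounded and analytic on the unit disc. -/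
def BddAnalytic (f : ℂ → ℂ) : Prop :=
  DifferentiableOn ℂ f disc ∧ ∃ M : ℝ, ∀ z ∈ disc, ‖f z‖ ≤ M

/-- `f` is an inner function: `f ∈ H^∞` and the radial limits of `|f|` equal `1`
at almost every point of the circle. -/
def IsInner (f : ℂ → ℂ) : Prop :=
  BddAnalytic f ∧
    ∀ᵐ θ ∂(volume.restrict (Set.Ico (0 : ℝ) (2 * Real.pi))),
      Tendsto (fun r : ℝ => ‖f ((r : ℂ) * ePt θ)‖)
        (𝓝[<] (1 : ℝ)) (𝓝 (1 : ℝ))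

/-- `η_f(ε) = inf {|f(z)| : ρ(z, Z(f)) > ε} > 0`. -/
def WEPAt (f : ℂ → ℂ) (ε : ℝ) : Prop :=
  ∃ η : ℝ, 0 < η ∧ ∀ z ∈ disc,
    ENNReal.ofReal ε < pdistSet z (zeroSet f) → η ≤ ‖f z‖

/-- The Weak Embedding Property. -/
def HasWEP (f : ℂ → ℂ) : Prop := ∀ ε : ℝ, 0 < ε → WEPAt f ε

/-- `f` is wepable: some multiple `f·J` of `f` by an inner function `J` has the WEP. -/
def Wepable (f : ℂ → ℂ) : Prop :=
  ∃ J : ℂ → ℂ, IsInner J ∧ HasWEP (fun z => f z * J z)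

/-- The singular inner function associated to a (positive singular) measure `μ`
on the unit circle: `S_μ(z) = exp (-∫ (w+z)/(w-z) dμ(w))`. -/
def singInner (μ : Measure ℂ) (z : ℂ) : ℂ :=
  Complex.exp (-∫ w, (w + z) / (w - z) ∂μ)

/-- The (closed) support of a measure on `ℂ`. -/
def measSupport (μ : Measure ℂ) : Set ℂ :=
  {x : ℂ | ∀ U : Set ℂ, IsOpen U → x ∈ U → μ U ≠ 0}

/-- An individual Blaschke factor with zero at `a ∈ 𝔻`. -/
def blaschkeFactor (a z : ℂ) : ℂ :=
  if a = 0 then z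
  else ((‖a‖ : ℂ) / a) * ((a - z) / (1 - (starRingEnd ℂ) a * z))

/-- A Blaschke factor, where points on the unit circle are allowed as padding and
give the constant factor `1` (this allows finite Blaschke products). -/
def bFactor (a z : ℂ) : ℂ := if ‖a‖ < 1 then blaschkeFactor a z else 1

/-- A Blaschke sequence: points of the closed disc satisfying the Blaschke condition
`Σ (1 - |a_n|) < ∞`. -/
def IsBlaschkeSeq (a : ℕ → ℂ) : Prop :=
  (∀ n, ‖a n‖ ≤ 1) ∧ Summable (fun n => 1 - ‖a n‖)

/-- `B` is the Blaschke product with zero sequence `a`. -/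
def IsBlaschkeProductWith (a : ℕ → ℂ) (B : ℂ → ℂ) : Prop :=
  IsBlaschkeSeq a ∧ ∀ z ∈ disc,
    Tendsto (fun N => ∏ n ∈ Finset.range N, bFactor (a n) z) atTop (𝓝 (B z))

/-- `B` is a Blaschke product. -/
def IsBlaschkeProduct (B : ℂ → ℂ) : Prop := ∃ a : ℕ → ℂ, IsBlaschkeProductWith a B

/-- `B` is a Blaschke product whose zero set is exactly `Λ ⊆ 𝔻`. -/
def IsBlaschkeWithZeroSet (Λ : Set ℂ) (B : ℂ → ℂ) : Prop :=
  ∃ a : ℕ → ℂ, IsBlaschkeProductWith a B ∧ Set.range a ∩ disc = Λ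

/-- `S` is easily wepable: there are `m < 1` and a Blaschke product `B` with
`Z(B) ⊆ {|S| < m}` such that `SB` has the WEP. -/
def EasilyWepable (S : ℂ → ℂ) : Prop :=
  ∃ m : ℝ, m < 1 ∧ ∃ B : ℂ → ℂ, IsBlaschkeProduct B ∧
    HasWEP (fun z => S z * B z) ∧
    zeroSet B ⊆ {z ∈ disc | ‖S z‖ < m}

/-- The Poisson integral of a finite measure `μ` on the unit circle. -/
def poisson (μ : Measure ℂ) (z : ℂ) : ℝ :=
  ∫ w, (1 - ‖z‖ ^ 2) / ‖w - z‖ ^ 2 ∂μ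

/-- `E ⊆ 𝕋` is porous with constant `C`: every arc `J` contains a subarc
`J' ⊆ J \ E` with `|J'| > C|J|`. -/
def PorousWith (C : ℝ) (E : Set ℂ) : Prop :=
  ∀ a t : ℝ, 0 < t → t ≤ 1 →
    ∃ a' t' : ℝ, 0 < t' ∧ arc a' t' ⊆ arc a t \ E ∧ C * t < t'

/-- `E ⊆ 𝕋` is porous. -/
def Porous (E : Set ℂ) : Prop := ∃ C : ℝ, 0 < C ∧ PorousWith C E

/-- `w(t) = sup { μ(J) : J ⊆ 𝕋 an arc with |J| = t }`. -/
def wSup (μ : Measure ℂ) (t : ℝ) : ℝ :=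
  sSup {x : ℝ | ∃ a : ℝ, x = (μ (arc a t)).toReal}

/-- The top half `T(J)` of the Carleson box of the dyadic arc `J` indexed by `(n,k)`. -/
def topBox (n k : ℕ) : Set ℂ :=
  {z : ℂ | ∃ r θ : ℝ, z = (r : ℂ) * ePt θ ∧ dyA n k ≤ θ ∧ θ ≤ dyA n (k + 1) ∧
    1 - dyL n ≤ r ∧ r ≤ 1 - dyL n / 2}

/-- The boundary `∂T(J)` of the top half of the Carleson box (its four sides). -/
def topBoxBoundary (n k : ℕ) : Set ℂ :=
  ((fun θ : ℝ => ((1 - dyL n : ℝ) : ℂ) * ePt θ) '' Set.Icc (dyA n k) (dyA n (k + 1))) ∪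
  ((fun θ : ℝ => ((1 - dyL n / 2 : ℝ) : ℂ) * ePt θ) '' Set.Icc (dyA n k) (dyA n (k + 1))) ∪
  ((fun r : ℝ => (r : ℂ) * ePt (dyA n k)) '' Set.Icc (1 - dyL n) (1 - dyL n / 2)) ∪
  ((fun r : ℝ => (r : ℂ) * ePt (dyA n (k + 1))) '' Set.Icc (1 - dyL n) (1 - dyL n / 2))

/-- The arclength measure `ds` on `∂T(J)`. -/
def topBoxBoundaryMeasure (n k : ℕ) : Measure ℂ :=
  ENNReal.ofReal (1 - dyL n) •
    ((volume.restrict (Set.Icc (dyA n k) (dyA n (k + 1)))).map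
      (fun θ : ℝ => ((1 - dyL n : ℝ) : ℂ) * ePt θ)) +
  ENNReal.ofReal (1 - dyL n / 2) •
    ((volume.restrict (Set.Icc (dyA n k) (dyA n (k + 1)))).map
      (fun θ : ℝ => ((1 - dyL n / 2 : ℝ) : ℂ) * ePt θ)) +
  (volume.restrict (Set.Icc (1 - dyL n) (1 - dyL n / 2))).map
    (fun r : ℝ => (r : ℂ) * ePt (dyA n k)) +
  (volume.restrict (Set.Icc (1 - dyL n) (1 - dyL n / 2))).map
    (fun r : ℝ => (r : ℂ) * ePt (dyA n (k + 1)))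

/-- `u` is harmonic on the unit disc. -/
def HarmonicOnDisc (u : ℂ → ℝ) : Prop :=
  ContDiffOn ℝ 2 u disc ∧
    ∀ z ∈ disc,
      iteratedFDeriv ℝ 2 u z ![1, 1] + iteratedFDeriv ℝ 2 u z ![Complex.I, Complex.I] = 0

/-- The arc `2J`, with the same centre as the dyadic arc `J` indexed by `(n,k)`
and twice its length. -/
def doubleArc (n k : ℕ) : Set ℂ :=
  arc (2 * Real.pi * ((k : ℝ) - 1 / 2) * ((2 : ℝ) ^ n)⁻¹) (2 * dyL n)

/-- The dyadic arcs `J` with `2J ⊆ 𝕋 \ E`. -/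
def goodDy (E : Set ℂ) : Set (ℕ × ℕ) :=
  {p : ℕ × ℕ | p.2 < 2 ^ p.1 ∧ doubleArc p.1 p.2 ⊆ circleSet \ E}

/-- The maximal dyadic arcs `J` with `2J ⊆ 𝕋 \ E`. -/
def maxGoodDy (E : Set ℂ) : Set (ℕ × ℕ) :=
  {p ∈ goodDy E | ∀ q ∈ goodDy E,
    dyadicArc p.1 p.2 ⊆ dyadicArc q.1 q.2 → dyadicArc p.1 p.2 = dyadicArc q.1 q.2}

/-- `‖f‖_{∞,n} = sup_{z ∈ 𝔻} (Σ_j |f_j(z)|²)^{1/2}` for an `n`-tuple of functions. -/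
def hinfNorm (n : ℕ) (f : Fin n → ℂ → ℂ) : ℝ≥0∞ :=
  ⨆ z ∈ disc, ENNReal.ofReal (Real.sqrt (∑ j, ‖f j z‖ ^ 2))

/-- `χ_I(f) = inf {‖g‖_{∞,n} : ∃ h ∈ H^∞, Σ g_j f_j + h I ≡ 1}`. -/
def chiC (n : ℕ) (I : ℂ → ℂ) (f : Fin n → ℂ → ℂ) : ℝ≥0∞ :=
  ⨅ g ∈ {g : Fin n → ℂ → ℂ |
      (∀ j, DifferentiableOn ℂ (g j) disc) ∧
      ∃ h : ℂ → ℂ, BddAnalytic h ∧ ∀ z ∈ disc, (∑ j, g j z * f j z) + h z * I z = 1},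
    hinfNorm n g

/-- `c_n(δ, I) = sup {χ_I(f) : δ² ≤ inf_{λ ∈ Z(I)} Σ |f_j(λ)|², ‖f‖_{∞,n} ≤ 1}`. -/
def cConst (n : ℕ) (I : ℂ → ℂ) (δ : ℝ) : ℝ≥0∞ :=
  ⨆ f ∈ {f : Fin n → ℂ → ℂ |
      (∀ j, DifferentiableOn ℂ (f j) disc) ∧ hinfNorm n f ≤ 1 ∧
      ∀ lam ∈ zeroSet I, δ ^ 2 ≤ ∑ j, ‖f j lam‖ ^ 2},
    chiC n I f

/-- `δ_n(I) = inf {δ : c_n(δ, I) < ∞}`. -/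
def deltaN (n : ℕ) (I : ℂ → ℂ) : ℝ :=
  sInf {δ : ℝ | δ ∈ Set.Ioo (0 : ℝ) 1 ∧ cConst n I δ < ⊤}

/-- `δ̃(I) = inf {ε : η_I(ε) > 0}`. -/
def tildeDelta (I : ℂ → ℂ) : ℝ :=
  sInf {ε : ℝ | 0 < ε ∧ WEPAt I ε}

/-- The atomic measure `μ = Σ_s b_s δ_{x_s}`. -/
def atomicMeasure (b : ℕ → ℝ) (x : ℕ → ℂ) : Measure ℂ :=
  Measure.sum (fun s => ENNReal.ofReal (b s) • Measure.dirac (x s))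


lemma ePt_add_int (θ : ℝ) (k : ℤ) : ePt (θ + 2 * Real.pi * k) = ePt θ := by
  unfold ePt
  push_cast
  rw [add_mul, Complex.exp_add]
  have h : Complex.exp (2 * (Real.pi:ℂ) * (k:ℂ) * Complex.I) = 1 := by
    have := Complex.exp_int_mul_two_pi_mul_I k
    rw [← this]; ring_nf
  rw [h, mul_one]

lemma ePt_injOn : Set.InjOn ePt (Set.Ico 0 (2 * Real.pi)) := by
  intro x hx y hy hxy
  unfold ePt at hxy
  rw [Complex.exp_eq_exp_iff_exists_int] at hxy
  obtain ⟨n, hn⟩ := hxy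
  have hre : x = y + n * (2 * Real.pi) := by
    have := congrArg Complex.im hn
    simpa using this
  have hn0 : n = 0 := by
    rcases hx with ⟨hx0, hx2⟩; rcases hy with ⟨hy0, hy2⟩
    have hπ := Real.pi_pos
    by_contra h
    rcases lt_or_gt_of_ne h with h1 | h1
    · have hn1 : n ≤ -1 := by omega
      have : (n:ℝ) ≤ -1 := by exact_mod_cast hn1
      nlinarith
    · have : (1:ℝ) ≤ (n:ℝ) := by exact_mod_cast h1
      nlinarith
  rw [hn0] at hre; simpa using hre
lemma two_pi_pos : (0:ℝ) < 2 * Real.pi := by positivity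

lemma arc_shift (a t : ℝ) (k : ℤ) : arc (a + 2 * Real.pi * k) t = arc a t := by
  unfold arc
  have himg : Set.Ico (a + 2*Real.pi*k) (a + 2*Real.pi*k + 2*Real.pi*t)
      = (fun x => x + 2*Real.pi*k) '' Set.Ico a (a + 2*Real.pi*t) := by
    rw [Set.image_add_const_Ico]; ring_nf
  rw [himg, Set.image_image]
  apply Set.image_congr
  intro x _
  exact ePt_add_int x k

lemma arc_mono {a t a' t' : ℝ}
    (h : Set.Ico a' (a' + 2*Real.pi*t') ⊆ Set.Ico a (a + 2*Real.pi*t)) :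
    arc a' t' ⊆ arc a t := Set.image_mono h

lemma subset_of_ePt_image_subset {S T : Set ℝ} (hS : S ⊆ Set.Ico 0 (2*Real.pi))
    (hT : T ⊆ Set.Ico 0 (2*Real.pi)) (h : ePt '' S ⊆ ePt '' T) : S ⊆ T := by
  intro x hx
  obtain ⟨y, hy, hxy⟩ := h ⟨x, hx, rfl⟩
  rwa [ePt_injOn (hT hy) (hS hx) hxy] at hy

/-- reduce left endpoint to [0, 2π) -/
lemma arc_reduce (a t : ℝ) : ∃ b, b ∈ Set.Ico 0 (2*Real.pi) ∧ arc a t = arc b t := by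
  set k : ℤ := ⌊a / (2*Real.pi)⌋ with hk
  refine ⟨a - 2*Real.pi*k, ⟨?_, ?_⟩, ?_⟩
  · have := Int.floor_le (a / (2*Real.pi))
    have h2 : 2*Real.pi*(k:ℝ) ≤ a := by
      rw [mul_comm]
      exact (le_div_iff₀ two_pi_pos).mp this
    linarith
  · have := Int.lt_floor_add_one (a / (2*Real.pi))
    have h2 : a < 2*Real.pi*((k:ℝ)+1) := by
      rw [mul_comm]
      exact (div_lt_iff₀ two_pi_pos).mp this
    linarith [Real.pi_pos]
  · rw [← arc_shift (a - 2*Real.pi*k) t k]; ring_nf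
/-- the angle interval of a dyadic arc -/
def dyI (m j : ℕ) : Set ℝ :=
  Set.Ico (2*Real.pi*j*((2:ℝ)^m)⁻¹) (2*Real.pi*(j+1)*((2:ℝ)^m)⁻¹)

lemma dyadicArc_eq_image (m j : ℕ) : dyadicArc m j = ePt '' dyI m j := by
  unfold dyadicArc arc dyI dyA dyL
  congr 2
  ring

lemma dyI_subset (m j : ℕ) (hj : j < 2^m) : dyI m j ⊆ Set.Ico 0 (2*Real.pi) := by
  unfold dyI
  apply Set.Ico_subset_Ico
  · positivity
  · have h1 : (j:ℝ) + 1 ≤ 2^m := by exact_mod_cast hj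
    have h2 : (0:ℝ) < (2:ℝ)^m := by positivity
    have h3 : ((j:ℝ)+1) * ((2:ℝ)^m)⁻¹ ≤ 1 := by
      rw [← div_eq_mul_inv]; exact (div_le_one h2).mpr h1
    calc 2*Real.pi*((j:ℝ)+1)*((2:ℝ)^m)⁻¹ = 2*Real.pi*(((j:ℝ)+1)*((2:ℝ)^m)⁻¹) := by ring
      _ ≤ 2*Real.pi*1 := mul_le_mul_of_nonneg_left h3 (le_of_lt two_pi_pos)
      _ = 2*Real.pi := mul_one _

lemma dyI_sub_dyI {m i j1 j2 : ℕ} (h1 : j1 * 2^i ≤ j2) (h2 : j2 < (j1+1) * 2^i) :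
    dyI (m+i) j2 ⊆ dyI m j1 := by
  unfold dyI
  have hp : (0:ℝ) < (2:ℝ)^m := by positivity
  have hpi : (0:ℝ) < (2:ℝ)^i := by positivity
  have c1 : (j1:ℝ) * 2^i ≤ j2 := by exact_mod_cast h1
  have c2 : (j2:ℝ) + 1 ≤ ((j1:ℝ)+1) * 2^i := by exact_mod_cast h2
  apply Set.Ico_subset_Ico
  · calc 2*Real.pi*(j1:ℝ)*((2:ℝ)^m)⁻¹
        = ((j1:ℝ)*2^i) * (2*Real.pi*(((2:ℝ)^m)⁻¹*((2:ℝ)^i)⁻¹)) := by field_simp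
      _ ≤ (j2:ℝ) * (2*Real.pi*(((2:ℝ)^m)⁻¹*((2:ℝ)^i)⁻¹)) :=
          mul_le_mul_of_nonneg_right c1 (by positivity)
      _ = 2*Real.pi*(j2:ℝ)*((2:ℝ)^(m+i))⁻¹ := by rw [pow_add, mul_inv]; ring
  · calc 2*Real.pi*((j2:ℝ)+1)*((2:ℝ)^(m+i))⁻¹
        = ((j2:ℝ)+1) * (2*Real.pi*(((2:ℝ)^m)⁻¹*((2:ℝ)^i)⁻¹)) := by
          rw [pow_add, mul_inv]; ring
      _ ≤ (((j1:ℝ)+1)*2^i) * (2*Real.pi*(((2:ℝ)^m)⁻¹*((2:ℝ)^i)⁻¹)) :=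
          mul_le_mul_of_nonneg_right c2 (by positivity)
      _ = 2*Real.pi*((j1:ℝ)+1)*((2:ℝ)^m)⁻¹ := by field_simp

lemma dyadicArc_sub_dyadicArc {m i j1 j2 : ℕ} (h1 : j1 * 2^i ≤ j2)
    (h2 : j2 < (j1+1) * 2^i) : dyadicArc (m+i) j2 ⊆ dyadicArc m j1 := by
  rw [dyadicArc_eq_image, dyadicArc_eq_image]
  exact Set.image_mono (dyI_sub_dyI h1 h2)
lemma dyI_nonempty (m j : ℕ) : (dyI m j).Nonempty := by
  unfold dyI
  rw [Set.nonempty_Ico]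
  have : (0:ℝ) < ((2:ℝ)^m)⁻¹ := by positivity
  nlinarith [Real.pi_pos]

lemma dyadic_sub_arith {m1 j1 m2 j2 : ℕ} (hj1 : j1 < 2^m1) (hj2 : j2 < 2^m2)
    (h : dyadicArc m2 j2 ⊆ dyadicArc m1 j1) :
    m1 ≤ m2 ∧ j1 * 2^(m2-m1) ≤ j2 ∧ j2 < (j1+1) * 2^(m2-m1) := by
  rw [dyadicArc_eq_image, dyadicArc_eq_image] at h
  have hsub : dyI m2 j2 ⊆ dyI m1 j1 :=
    subset_of_ePt_image_subset (dyI_subset _ _ hj2) (dyI_subset _ _ hj1) h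
  unfold dyI at hsub
  have hne : 2*Real.pi*(j2:ℝ)*((2:ℝ)^m2)⁻¹ < 2*Real.pi*((j2:ℝ)+1)*((2:ℝ)^m2)⁻¹ := by
    have : (0:ℝ) < ((2:ℝ)^m2)⁻¹ := by positivity
    nlinarith [Real.pi_pos]
  rw [Set.Ico_subset_Ico_iff hne] at hsub
  obtain ⟨hle1, hle2⟩ := hsub
  have hπ := Real.pi_pos
  have p1 : (0:ℝ) < (2:ℝ)^m1 := by positivity
  have p2 : (0:ℝ) < (2:ℝ)^m2 := by positivity
  -- first : m1 ≤ m2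
  have hmm : m1 ≤ m2 := by
    by_contra hcon
    push_neg at hcon
    have hpow : (2:ℝ)^m2 < (2:ℝ)^m1 := by
      exact pow_lt_pow_right₀ one_lt_two hcon
    -- length comparison : (2^m2)⁻¹ ≤ (2^m1)⁻¹ from hle1, hle2
    have hlen : 2*Real.pi*((2:ℝ)^m2)⁻¹ ≤ 2*Real.pi*((2:ℝ)^m1)⁻¹ := by nlinarith
    have : ((2:ℝ)^m2)⁻¹ ≤ ((2:ℝ)^m1)⁻¹ := by nlinarith
    have : (2:ℝ)^m1 ≤ (2:ℝ)^m2 := by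
      rw [← inv_inv ((2:ℝ)^m1), ← inv_inv ((2:ℝ)^m2)]
      exact inv_anti₀ (by positivity) this
    linarith
  refine ⟨hmm, ?_, ?_⟩
  · have e : (2:ℝ)^m2 = (2:ℝ)^m1 * (2:ℝ)^(m2-m1) := by
      rw [← pow_add]; congr 1; omega
    have r1 : (j1:ℝ) * 2^(m2-m1) ≤ (j2:ℝ) := by
      rw [← div_eq_mul_inv, ← div_eq_mul_inv, div_le_div_iff₀ p1 p2] at hle1
      rw [e] at hle1
      have h3 : (↑j1*2^(m2-m1)) * (2*Real.pi*2^m1) ≤ (j2:ℝ) * (2*Real.pi*2^m1) := by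
        ring_nf at hle1 ⊢
        linarith
      exact le_of_mul_le_mul_right h3 (by positivity)
    exact_mod_cast r1
  · have e : (2:ℝ)^m2 = (2:ℝ)^m1 * (2:ℝ)^(m2-m1) := by
      rw [← pow_add]; congr 1; omega
    have r2 : (j2:ℝ) + 1 ≤ ((j1:ℝ)+1) * 2^(m2-m1) := by
      rw [← div_eq_mul_inv, ← div_eq_mul_inv, div_le_div_iff₀ p2 p1] at hle2
      rw [e] at hle2
      have h3 : ((j2:ℝ)+1) * (2*Real.pi*2^m1) ≤ (((j1:ℝ)+1)*2^(m2-m1)) * (2*Real.pi*2^m1) := by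
        ring_nf at hle2 ⊢
        linarith
      exact le_of_mul_le_mul_right h3 (by positivity)
    have : j2 + 1 ≤ (j1+1) * 2^(m2-m1) := by exact_mod_cast r2
    omega

lemma exists_dyI_sub {A B : ℝ} (m : ℕ) (hA : 0 ≤ A) (hB : B ≤ 2*Real.pi)
    (hlen : A + 2*(2*Real.pi*((2:ℝ)^m)⁻¹) ≤ B) :
    ∃ j, j < 2^m ∧ dyI m j ⊆ Set.Ico A B := by
  have hπ := Real.pi_pos
  have p1 : (0:ℝ) < (2:ℝ)^m := by positivity
  set j := ⌈A * 2^m / (2*Real.pi)⌉₊ with hj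
  have hjge : A * 2^m / (2*Real.pi) ≤ (j:ℝ) := Nat.le_ceil _
  have hjlt : (j:ℝ) < A * 2^m / (2*Real.pi) + 1 :=
    Nat.ceil_lt_add_one (by positivity)
  have low : A ≤ 2*Real.pi*(j:ℝ)*((2:ℝ)^m)⁻¹ := by
    rw [div_le_iff₀ two_pi_pos] at hjge
    calc A = A * 2^m * ((2:ℝ)^m)⁻¹ := by field_simp
      _ ≤ (j:ℝ) * (2*Real.pi) * ((2:ℝ)^m)⁻¹ := by
          apply mul_le_mul_of_nonneg_right hjge (by positivity)
      _ = 2*Real.pi*(j:ℝ)*((2:ℝ)^m)⁻¹ := by ring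
  have high : 2*Real.pi*((j:ℝ)+1)*((2:ℝ)^m)⁻¹ ≤ B := by
    have h1 : (j:ℝ) * (2*Real.pi) < A * 2^m + 2*Real.pi := by
      rw [div_add' _ _ _ (ne_of_gt two_pi_pos), lt_div_iff₀ two_pi_pos] at hjlt
      linarith
    have h2 : 2*Real.pi*((j:ℝ)+1)*((2:ℝ)^m)⁻¹
        = ((j:ℝ)*(2*Real.pi) + 2*Real.pi) * ((2:ℝ)^m)⁻¹ := by ring
    rw [h2]
    calc ((j:ℝ)*(2*Real.pi) + 2*Real.pi) * ((2:ℝ)^m)⁻¹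
        ≤ (A * 2^m + 2*Real.pi + 2*Real.pi) * ((2:ℝ)^m)⁻¹ := by
          apply mul_le_mul_of_nonneg_right (by linarith) (by positivity)
      _ = A + 2*(2*Real.pi*((2:ℝ)^m)⁻¹) := by field_simp; ring
      _ ≤ B := hlen
  have hjlt2 : j < 2^m := by
    by_contra hcon
    push_neg at hcon
    have : ((2:ℝ)^m : ℝ) ≤ (j:ℝ) := by exact_mod_cast hcon
    have : 2*Real.pi ≤ 2*Real.pi*(j:ℝ)*((2:ℝ)^m)⁻¹ := by
      calc 2*Real.pi = 2*Real.pi*((2:ℝ)^m)*((2:ℝ)^m)⁻¹ := by field_simp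
        _ ≤ 2*Real.pi*(j:ℝ)*((2:ℝ)^m)⁻¹ := by
            apply mul_le_mul_of_nonneg_right _ (by positivity)
            nlinarith
    have hjb : 2*Real.pi*(j:ℝ)*((2:ℝ)^m)⁻¹ < B := by
      have : (0:ℝ) < ((2:ℝ)^m)⁻¹ := by positivity
      nlinarith [high]
    linarith
  exact ⟨j, hjlt2, Set.Ico_subset_Ico low high⟩
lemma dyL_pos (m : ℕ) : 0 < dyL m := by unfold dyL; positivity

lemma dyL_le_one (m : ℕ) : dyL m ≤ 1 := by
  unfold dyL
  rw [inv_le_one_iff₀]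
  right; exact one_le_pow₀ one_le_two

lemma arc_contains_piece (a : ℝ) {t : ℝ} (ht0 : 0 < t) (ht1 : t ≤ 1) :
    ∃ A B : ℝ, 0 ≤ A ∧ B ≤ 2*Real.pi ∧ Real.pi * t ≤ B - A ∧
      ePt '' Set.Ico A B ⊆ arc a t := by
  have hπ := Real.pi_pos
  obtain ⟨b, ⟨hb0, hb2⟩, hab⟩ := arc_reduce a t
  rw [hab]
  by_cases hcase : b + 2*Real.pi*t ≤ 2*Real.pi
  · exact ⟨b, b + 2*Real.pi*t, hb0, hcase, by nlinarith, by rw [arc]⟩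
  · push_neg at hcase
    by_cases hhalf : 2*Real.pi - b ≥ Real.pi * t
    · refine ⟨b, 2*Real.pi, hb0, le_refl _, by linarith, ?_⟩
      apply Set.image_mono
      apply Set.Ico_subset_Ico_right
      linarith
    · push_neg at hhalf
      refine ⟨0, b + 2*Real.pi*t - 2*Real.pi, le_refl _, by nlinarith, by nlinarith, ?_⟩
      intro z hz
      obtain ⟨θ, ⟨hθ0, hθ1⟩, rfl⟩ := hz
      refine ⟨θ + 2*Real.pi, ⟨by linarith, by linarith⟩, ?_⟩
      have h1 := ePt_add_int θ 1
      push_cast at h1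
      rw [← h1]
      norm_num

lemma free_descendant {E : Set ℂ} {C : ℝ} (hC : 0 < C) (hC2 : C ≤ 1/2)
    (hpor : PorousWith C E) {d : ℕ} (hd : ((2:ℝ)^d)⁻¹ ≤ C/4) (m j : ℕ)
    (hj : j < 2^m) :
    ∃ j', j*2^d ≤ j' ∧ j' < (j+1)*2^d ∧ dyadicArc (m+d) j' ∩ E = ∅ := by
  have hπ := Real.pi_pos
  have hpm : (0:ℝ) < ((2:ℝ)^m)⁻¹ := by positivity
  obtain ⟨a', t', ht'0, hsub, hlt⟩ := hpor (dyA m j) (dyL m) (dyL_pos m) (dyL_le_one m)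
  set t'' := min t' 1 with ht''
  have ht''0 : 0 < t'' := lt_min ht'0 one_pos
  have ht''1 : t'' ≤ 1 := min_le_right _ _
  have hlt1 : C * dyL m < 1 := by
    calc C * dyL m ≤ (1/2) * 1 := by
          apply mul_le_mul hC2 (dyL_le_one m) (le_of_lt (dyL_pos m)) (by norm_num)
      _ < 1 := by norm_num
  have hlt'' : C * dyL m < t'' := lt_min hlt hlt1
  have hsub'' : arc a' t'' ⊆ dyadicArc m j \ E := by
    refine Set.Subset.trans ?_ hsub
    apply arc_mono
    apply Set.Ico_subset_Ico_right
    have : t'' ≤ t' := min_le_left _ _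
    nlinarith
  obtain ⟨A, B, hA0, hB2, hlen, hpiece⟩ := arc_contains_piece a' ht''0 ht''1
  have hpieceSub : ePt '' Set.Ico A B ⊆ dyadicArc m j \ E :=
    Set.Subset.trans hpiece hsub''
  -- find dyadic interval of generation m+d inside [A,B)
  have hlen2 : A + 2*(2*Real.pi*((2:ℝ)^(m+d))⁻¹) ≤ B := by
    have e : ((2:ℝ)^(m+d))⁻¹ = ((2:ℝ)^m)⁻¹*((2:ℝ)^d)⁻¹ := by rw [pow_add, mul_inv]
    rw [e]
    have k1 : 4*Real.pi*((2:ℝ)^m)⁻¹*((2:ℝ)^d)⁻¹ ≤ 4*Real.pi*((2:ℝ)^m)⁻¹*(C/4) := by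
      calc 4*Real.pi*((2:ℝ)^m)⁻¹*((2:ℝ)^d)⁻¹
          = (4*Real.pi*((2:ℝ)^m)⁻¹)*((2:ℝ)^d)⁻¹ := by ring
        _ ≤ (4*Real.pi*((2:ℝ)^m)⁻¹)*(C/4) := mul_le_mul_of_nonneg_left hd (by positivity)
        _ = 4*Real.pi*((2:ℝ)^m)⁻¹*(C/4) := by ring
    have k2 : Real.pi*(C * dyL m) ≤ Real.pi * t'' :=
      mul_le_mul_of_nonneg_left hlt''.le (le_of_lt hπ)
    unfold dyL at k2
    nlinarith [hlen]
  obtain ⟨j', hj'lt, hj'sub⟩ := exists_dyI_sub (m+d) hA0 hB2 hlen2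
  have harcsub : dyadicArc (m+d) j' ⊆ dyadicArc m j \ E := by
    rw [dyadicArc_eq_image]
    exact Set.Subset.trans (Set.image_mono hj'sub) hpieceSub
  have harcsub2 : dyadicArc (m+d) j' ⊆ dyadicArc m j :=
    Set.Subset.trans harcsub (Set.diff_subset)
  obtain ⟨_, h1, h2⟩ := dyadic_sub_arith hj hj'lt harcsub2
  rw [Nat.add_sub_cancel_left] at h1 h2
  refine ⟨j', h1, h2, ?_⟩
  rw [Set.eq_empty_iff_forall_notMem]
  rintro z ⟨hz1, hz2⟩
  exact (harcsub hz1).2 hz2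
open Classical in
/-- indices of generation n+i dyadic subarcs of (n,k) that meet E -/
noncomputable def badF (E : Set ℂ) (n k i : ℕ) : Finset ℕ :=
  (Finset.Ico (k*2^i) ((k+1)*2^i)).filter (fun j => (dyadicArc (n+i) j ∩ E).Nonempty)

lemma card_badF_le (E : Set ℂ) (n k i : ℕ) : (badF E n k i).card ≤ 2^i := by
  classical
  unfold badF
  refine le_trans (Finset.card_filter_le _ _) ?_
  rw [Nat.card_Ico, add_mul, one_mul, Nat.add_sub_cancel_left]

lemma badF_mem_lt {E : Set ℂ} {n k i j : ℕ} (hk : k < 2^n) (hj : j ∈ badF E n k i) :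
    j < 2^(n+i) := by
  classical
  unfold badF at hj
  rw [Finset.mem_filter, Finset.mem_Ico] at hj
  have : (k+1) * 2^i ≤ 2^n * 2^i := by
    apply Nat.mul_le_mul_right; omega
  rw [pow_add]
  omega

lemma badF_step {E : Set ℂ} {C : ℝ} (hC : 0 < C) (hC2 : C ≤ 1/2)
    (hpor : PorousWith C E) {d : ℕ} (hd : ((2:ℝ)^d)⁻¹ ≤ C/4)
    {n k : ℕ} (hk : k < 2^n) (i : ℕ) :
    (badF E n k (i+d)).card ≤ (2^d - 1) * (badF E n k i).card := by
  classical
  set free : ℕ → ℕ := fun j =>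
    if h : j < 2^(n+i) then Classical.choose (free_descendant hC hC2 hpor hd (n+i) j h)
    else 0 with hfree
  have hfreespec : ∀ j (h : j < 2^(n+i)),
      j*2^d ≤ free j ∧ free j < (j+1)*2^d ∧ dyadicArc ((n+i)+d) (free j) ∩ E = ∅ := by
    intro j h
    simp only [hfree, dif_pos h]
    exact Classical.choose_spec (free_descendant hC hC2 hpor hd (n+i) j h)
  have hsub : badF E n k (i+d) ⊆
      (badF E n k i).biUnion
        (fun j => (Finset.Ico (j*2^d) ((j+1)*2^d)).erase (free j)) := by
    intro j' hj'
    unfold badF at hj'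
    rw [Finset.mem_filter, Finset.mem_Ico] at hj'
    obtain ⟨⟨hlo, hhi⟩, hmeet⟩ := hj'
    set j := j' / 2^d with hjdef
    have hposd0 : 0 < 2^d := by positivity
    have hdm : j'/2^d*2^d + j'%2^d = j' := Nat.div_add_mod' j' (2^d)
    have hmod : j' % 2^d < 2^d := Nat.mod_lt _ hposd0
    have hanc1 : j * 2^d ≤ j' := by rw [hjdef]; exact Nat.div_mul_le_self _ _
    have hanc2 : j' < (j+1) * 2^d := by
      rw [hjdef, add_mul, one_mul]
      omega
    have hposd : 0 < 2^d := by positivity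
    have hjbound : k*2^i ≤ j ∧ j < (k+1)*2^i := by
      constructor
      · have h1 : (k*2^i)*2^d ≤ j' := by rw [mul_assoc, ← pow_add]; exact hlo
        exact (Nat.le_div_iff_mul_le hposd).mpr h1
      · have h2 : j' < ((k+1)*2^i)*2^d := by rw [mul_assoc, ← pow_add]; exact hhi
        exact (Nat.div_lt_iff_lt_mul hposd).mpr h2
    have hcontain : dyadicArc (n+(i+d)) j' ⊆ dyadicArc (n+i) j := by
      have := dyadicArc_sub_dyadicArc (m := n+i) hanc1 hanc2
      rwa [Nat.add_assoc] at this
    have hjmem : j ∈ badF E n k i := by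
      unfold badF
      rw [Finset.mem_filter, Finset.mem_Ico]
      refine ⟨⟨hjbound.1, hjbound.2⟩, ?_⟩
      obtain ⟨x, hx1, hx2⟩ := hmeet
      exact ⟨x, hcontain hx1, hx2⟩
    rw [Finset.mem_biUnion]
    refine ⟨j, hjmem, ?_⟩
    rw [Finset.mem_erase, Finset.mem_Ico]
    refine ⟨?_, hanc1, hanc2⟩
    intro heq
    have hjlt : j < 2^(n+i) := badF_mem_lt hk hjmem
    have hspec := (hfreespec j hjlt).2.2
    rw [← heq] at hspec
    obtain ⟨x, hx1, hx2⟩ := hmeet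
    rw [← Nat.add_assoc] at hx1
    rw [Set.eq_empty_iff_forall_notMem] at hspec
    exact hspec x ⟨hx1, hx2⟩
  calc (badF E n k (i+d)).card
      ≤ ((badF E n k i).biUnion
          (fun j => (Finset.Ico (j*2^d) ((j+1)*2^d)).erase (free j))).card :=
        Finset.card_le_card hsub
    _ ≤ ∑ j ∈ badF E n k i, ((Finset.Ico (j*2^d) ((j+1)*2^d)).erase (free j)).card :=
        Finset.card_biUnion_le
    _ ≤ ∑ j ∈ badF E n k i, (2^d - 1) := by
        apply Finset.sum_le_sum
        intro j hj
        have hjlt : j < 2^(n+i) := badF_mem_lt hk hj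
        have hspec := hfreespec j hjlt
        have hmem : free j ∈ Finset.Ico (j*2^d) ((j+1)*2^d) := by
          rw [Finset.mem_Ico]; exact ⟨hspec.1, hspec.2.1⟩
        rw [Finset.card_erase_of_mem hmem, Nat.card_Ico]
        have : (j+1)*2^d = j*2^d + 2^d := by ring
        omega
    _ = (2^d - 1) * (badF E n k i).card := by
        rw [Finset.sum_const, smul_eq_mul, mul_comm]

lemma badF_bound {E : Set ℂ} {C : ℝ} (hC : 0 < C) (hC2 : C ≤ 1/2)
    (hpor : PorousWith C E) {d : ℕ} (hd : ((2:ℝ)^d)⁻¹ ≤ C/4)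
    {n k : ℕ} (hk : k < 2^n) (q r : ℕ) :
    (badF E n k (q*d+r)).card ≤ 2^r * (2^d - 1)^q := by
  induction q with
  | zero => simpa using card_badF_le E n k r
  | succ q ih =>
      have : (q+1)*d + r = (q*d+r) + d := by ring
      rw [this]
      calc (badF E n k ((q*d+r)+d)).card ≤ (2^d-1) * (badF E n k (q*d+r)).card :=
            badF_step hC hC2 hpor hd hk _
        _ ≤ (2^d-1) * (2^r * (2^d-1)^q) := Nat.mul_le_mul_left _ ih
        _ = 2^r * (2^d-1)^(q+1) := by ring
lemma ofReal_dyL (m : ℕ) : ENNReal.ofReal (dyL m) = ((2:ℝ≥0∞)^m)⁻¹ := by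
  unfold dyL
  rw [ENNReal.ofReal_inv_of_pos (by positivity), ENNReal.ofReal_pow (by norm_num)]
  norm_num

lemma pow2_inv_split (a b : ℕ) :
    ((2:ℝ≥0∞)^(a+b))⁻¹ = ((2:ℝ≥0∞)^a)⁻¹ * ((2:ℝ≥0∞)^b)⁻¹ := by
  rw [pow_add, ENNReal.mul_inv]
  · exact Or.inl (by simp)
  · exact Or.inl (by simp [ENNReal.pow_ne_top])

lemma pow2_mul_inv_cancel (a : ℕ) : (2:ℝ≥0∞)^a * ((2:ℝ≥0∞)^a)⁻¹ = 1 :=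
  ENNReal.mul_inv_cancel (by simp) (by simp [ENNReal.pow_ne_top])

lemma forward_bound {E : Set ℂ} {C : ℝ} (hC : 0 < C) (hC2 : C ≤ 1/2)
    (hpor : PorousWith C E) {d : ℕ} (hdpos : 0 < d) (hd : ((2:ℝ)^d)⁻¹ ≤ C/4)
    {n k : ℕ} (hk : k < 2^n) :
    (∑' I : {p : ℕ × ℕ // p.2 < 2 ^ p.1 ∧ dyadicArc p.1 p.2 ⊆ dyadicArc n k ∧
        (dyadicArc p.1 p.2 ∩ E).Nonempty}, ENNReal.ofReal (dyL I.1.1))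
      ≤ ((d:ℝ≥0∞) * 2^d) * ((2:ℝ≥0∞)^n)⁻¹ := by
  classical
  haveI : NeZero d := ⟨Nat.pos_iff_ne_zero.mp hdpos⟩
  set g : (Σ _ : ℕ, ℕ) → ℝ≥0∞ := fun x =>
    if x.2 ∈ badF E n k x.1 then ((2:ℝ≥0∞)^(n+x.1))⁻¹ else 0 with hg
  set inj : {p : ℕ × ℕ // p.2 < 2 ^ p.1 ∧ dyadicArc p.1 p.2 ⊆ dyadicArc n k ∧
      (dyadicArc p.1 p.2 ∩ E).Nonempty} → (Σ _ : ℕ, ℕ) :=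
    fun I => ⟨I.1.1 - n, I.1.2⟩ with hinjdef
  have hmemarith : ∀ I : {p : ℕ × ℕ // p.2 < 2 ^ p.1 ∧
      dyadicArc p.1 p.2 ⊆ dyadicArc n k ∧ (dyadicArc p.1 p.2 ∩ E).Nonempty},
      n ≤ I.1.1 ∧ I.1.2 ∈ badF E n k (I.1.1 - n) := by
    rintro ⟨⟨m, j⟩, hj, hsub, hmeet⟩
    obtain ⟨hnm, h1, h2⟩ := dyadic_sub_arith hk hj hsub
    refine ⟨hnm, ?_⟩
    unfold badF
    rw [Finset.mem_filter, Finset.mem_Ico]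
    have e : n + (m - n) = m := by omega
    rw [e]
    exact ⟨⟨h1, h2⟩, hmeet⟩
  have hinj : Function.Injective inj := by
    rintro ⟨⟨m1, j1⟩, hp1⟩ ⟨⟨m2, j2⟩, hp2⟩ heq
    have h1 : n ≤ m1 := by simpa using (hmemarith ⟨⟨m1, j1⟩, hp1⟩).1
    have h2 : n ≤ m2 := by simpa using (hmemarith ⟨⟨m2, j2⟩, hp2⟩).1
    simp only [hinjdef, Sigma.mk.inj_iff, heq_eq_eq] at heq
    obtain ⟨e1, e2⟩ := heq
    have hm : m1 = m2 := by omega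
    subst hm
    exact Subtype.ext (by simp [e2])
  have hle : ∀ I, ENNReal.ofReal (dyL I.1.1) ≤ g (inj I) := by
    intro I
    have h := hmemarith I
    simp only [hg, hinjdef, if_pos h.2]
    rw [ofReal_dyL]
    have e : n + (I.1.1 - n) = I.1.1 := by omega
    rw [e]
  calc (∑' I, ENNReal.ofReal (dyL I.1.1))
      ≤ ∑' x, g x :=
        Summable.tsum_le_tsum_of_inj inj hinj (fun _ _ => zero_le) hle
          ENNReal.summable ENNReal.summable
    _ = ∑' i, ∑' j, g ⟨i, j⟩ := ENNReal.tsum_sigma' g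
    _ = ∑' i, ((badF E n k i).card : ℝ≥0∞) * ((2:ℝ≥0∞)^(n+i))⁻¹ := by
        apply tsum_congr
        intro i
        have h1 : ∑' j, g ⟨i, j⟩ = ∑ j ∈ badF E n k i, g ⟨i, j⟩ := by
          apply tsum_eq_sum
          intro b hb
          simp only [hg, if_neg hb]
        rw [h1]
        have h2 : ∀ j ∈ badF E n k i, g ⟨i, j⟩ = ((2:ℝ≥0∞)^(n+i))⁻¹ := by
          intro j hj; simp only [hg, if_pos hj]
        rw [Finset.sum_congr rfl h2, Finset.sum_const, nsmul_eq_mul]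
    _ ≤ ∑' i, ((2:ℝ≥0∞)^n)⁻¹ *
          (((2^d - 1 : ℕ) : ℝ≥0∞) * ((2:ℝ≥0∞)^d)⁻¹)^(i/d) := by
        apply ENNReal.tsum_le_tsum
        intro i
        have hcard : (badF E n k i).card ≤ 2^(i % d) * (2^d - 1)^(i/d) := by
          have := badF_bound hC hC2 hpor hd hk (i/d) (i % d)
          rwa [Nat.div_add_mod'] at this
        have hcast : ((badF E n k i).card : ℝ≥0∞)
            ≤ (2:ℝ≥0∞)^(i % d) * (((2^d - 1 : ℕ)) : ℝ≥0∞)^(i/d) := by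
          calc ((badF E n k i).card : ℝ≥0∞)
              ≤ ((2^(i % d) * (2^d - 1)^(i/d) : ℕ) : ℝ≥0∞) := by
                exact_mod_cast hcard
            _ = (2:ℝ≥0∞)^(i % d) * (((2^d - 1 : ℕ)) : ℝ≥0∞)^(i/d) := by
                push_cast
                norm_num
        calc ((badF E n k i).card : ℝ≥0∞) * ((2:ℝ≥0∞)^(n+i))⁻¹
            ≤ ((2:ℝ≥0∞)^(i % d) * (((2^d - 1 : ℕ)) : ℝ≥0∞)^(i/d)) *
              ((2:ℝ≥0∞)^(n+i))⁻¹ := mul_le_mul_left hcast _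
          _ = ((2:ℝ≥0∞)^n)⁻¹ *
              ((((2^d - 1 : ℕ)) : ℝ≥0∞) * ((2:ℝ≥0∞)^d)⁻¹)^(i/d) := by
              have ei : n + i = n + (d*(i/d) + i % d) := by rw [Nat.div_add_mod]
              have e3 : ((((2^d - 1 : ℕ)) : ℝ≥0∞) * ((2:ℝ≥0∞)^d)⁻¹)^(i/d)
                  = (((2^d - 1 : ℕ)) : ℝ≥0∞)^(i/d) * ((2:ℝ≥0∞)^(d*(i/d)))⁻¹ := by
                rw [mul_pow, ← ENNReal.inv_pow, ← pow_mul]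
              rw [ei, pow2_inv_split, pow2_inv_split, e3]
              calc ((2:ℝ≥0∞)^(i % d) * (((2^d - 1 : ℕ)) : ℝ≥0∞)^(i/d)) *
                    (((2:ℝ≥0∞)^n)⁻¹ * (((2:ℝ≥0∞)^(d*(i/d)))⁻¹ * ((2:ℝ≥0∞)^(i % d))⁻¹))
                  = (((2:ℝ≥0∞)^n)⁻¹ *
                    ((((2^d - 1 : ℕ)) : ℝ≥0∞)^(i/d) * ((2:ℝ≥0∞)^(d*(i/d)))⁻¹)) *
                    ((2:ℝ≥0∞)^(i % d) * ((2:ℝ≥0∞)^(i % d))⁻¹) := by ring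
                _ = ((2:ℝ≥0∞)^n)⁻¹ *
                    ((((2^d - 1 : ℕ)) : ℝ≥0∞)^(i/d) * ((2:ℝ≥0∞)^(d*(i/d)))⁻¹) := by
                    rw [pow2_mul_inv_cancel, mul_one]
    _ = ((2:ℝ≥0∞)^n)⁻¹ *
          ∑' i : ℕ, ((((2^d - 1 : ℕ)) : ℝ≥0∞) * ((2:ℝ≥0∞)^d)⁻¹)^(i/d) :=
        ENNReal.tsum_mul_left
    _ ≤ ((2:ℝ≥0∞)^n)⁻¹ * ((d:ℝ≥0∞) * 2^d) := by
        apply mul_le_mul_right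
        set x : ℝ≥0∞ := (((2^d - 1 : ℕ)) : ℝ≥0∞) * ((2:ℝ≥0∞)^d)⁻¹ with hx
        have hsum : ∑' i : ℕ, x^(i/d) = (d:ℝ≥0∞) * ∑' q : ℕ, x^q := by
          rw [← Equiv.tsum_eq (Nat.divModEquiv d).symm (fun i => x^(i/d))]
          rw [ENNReal.tsum_prod']
          have hinner : ∀ q : ℕ, ∑' r : Fin d,
              x ^ (((Nat.divModEquiv d).symm (q, r) : ℕ)/d) = (d:ℝ≥0∞) * x^q := by
            intro q
            have : ∀ r : Fin d, (((Nat.divModEquiv d).symm (q, r) : ℕ))/d = q := by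
              intro r
              simp only [Nat.divModEquiv_symm_apply]
              rw [mul_comm, Nat.mul_add_div hdpos, Nat.div_eq_of_lt r.2, add_zero]
            rw [tsum_congr (fun r => by rw [this r])]
            rw [tsum_fintype, Finset.sum_const]
            simp [nsmul_eq_mul]
          rw [tsum_congr hinner, ENNReal.tsum_mul_left]
        rw [hsum, ENNReal.tsum_geometric]
        apply mul_le_mul_right
        have hxle : ((2:ℝ≥0∞)^d)⁻¹ ≤ 1 - x := by
          have e2 : (((2^d - 1 : ℕ)) : ℝ≥0∞) + 1 = (2:ℝ≥0∞)^d := by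
            have hcc : ((2^d - 1 : ℕ) : ℝ≥0∞) + ((1:ℕ):ℝ≥0∞) = ((2^d : ℕ) : ℝ≥0∞) := by
              rw [← Nat.cast_add]
              congr 1
              have h1 : (1:ℕ) ≤ 2^d := Nat.one_le_two_pow
              omega
            simpa using hcc
          have hone : (1:ℝ≥0∞) = ((2:ℝ≥0∞)^d)⁻¹ + x := by
            rw [hx]
            calc (1:ℝ≥0∞) = (2:ℝ≥0∞)^d * ((2:ℝ≥0∞)^d)⁻¹ := (pow2_mul_inv_cancel d).symm
              _ = ((((2^d - 1 : ℕ)) : ℝ≥0∞) + 1) * ((2:ℝ≥0∞)^d)⁻¹ := by rw [e2]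
              _ = ((2:ℝ≥0∞)^d)⁻¹ + (((2^d - 1 : ℕ)) : ℝ≥0∞) * ((2:ℝ≥0∞)^d)⁻¹ := by ring
          have hxne : x ≠ ⊤ := by
            rw [hx]
            exact ENNReal.mul_ne_top (ENNReal.natCast_ne_top _)
              (by simp [ENNReal.inv_ne_top])

          rw [ENNReal.sub_eq_of_eq_add hxne hone]
        calc (1 - x)⁻¹ ≤ (((2:ℝ≥0∞)^d)⁻¹)⁻¹ := by
              rw [ENNReal.inv_le_inv]; exact hxle
          _ = (2:ℝ≥0∞)^d := inv_inv _
    _ = ((d:ℝ≥0∞) * 2^d) * ((2:ℝ≥0∞)^n)⁻¹ := mul_comm _ _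
lemma child_lt {n k i j : ℕ} (hk : k < 2^n) (hj : j < 2^i) : k*2^i + j < 2^(n+i) := by
  have h2 : (k+1)*2^i ≤ 2^n * 2^i := Nat.mul_le_mul_right _ (by omega)
  have h1 : k*2^i + 2^i = (k+1)*2^i := by ring
  rw [pow_add]
  omega

lemma exists_free_subarc {E : Set ℂ} {C : ℝ}
    (hsum : ∀ n k : ℕ, k < 2 ^ n →
      (∑' I : {p : ℕ × ℕ // p.2 < 2 ^ p.1 ∧ dyadicArc p.1 p.2 ⊆ dyadicArc n k ∧
          (dyadicArc p.1 p.2 ∩ E).Nonempty},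
        ENNReal.ofReal (dyL I.1.1)) ≤ ENNReal.ofReal (C * dyL n))
    {n k : ℕ} (hk : k < 2^n) :
    ∃ i ≤ ⌈C⌉₊, ∃ j < 2^i, dyadicArc (n+i) (k*2^i+j) ∩ E = ∅ := by
  classical
  set M := ⌈C⌉₊ with hM
  by_contra hcon
  push_neg at hcon
  have hmeet : ∀ i ≤ M, ∀ j < 2^i, (dyadicArc (n+i) (k*2^i+j) ∩ E).Nonempty := by
    intro i hi j hj
    exact hcon i hi j hj
  set ST := {p : ℕ × ℕ // p.2 < 2 ^ p.1 ∧ dyadicArc p.1 p.2 ⊆ dyadicArc n k ∧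
      (dyadicArc p.1 p.2 ∩ E).Nonempty} with hST
  set h : (Σ i : Fin (M+1), Fin (2^(i:ℕ))) → ST := fun x =>
    ⟨(n + x.1, k * 2^(x.1:ℕ) + x.2), by
      refine ⟨child_lt hk x.2.2, ?_, ?_⟩
      · exact dyadicArc_sub_dyadicArc (Nat.le_add_right _ _) (by
          have h2 := x.2.2
          have h1 : (k+1)*2^(x.1:ℕ) = k*2^(x.1:ℕ) + 2^(x.1:ℕ) := by ring
          omega)
      · exact hmeet x.1 (Nat.lt_succ_iff.mp x.1.2) x.2 x.2.2⟩ with hh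
  have hinj : Function.Injective h := by
    intro x y heq
    have e1 : n + (x.1:ℕ) = n + (y.1:ℕ) := congrArg (fun z : ST => (z.1).1) heq
    have e2 : k * 2^(x.1:ℕ) + (x.2:ℕ) = k * 2^(y.1:ℕ) + (y.2:ℕ) :=
      congrArg (fun z : ST => (z.1).2) heq
    have hi : (x.1:ℕ) = (y.1:ℕ) := by omega
    have hpow : (2:ℕ)^(x.1:ℕ) = 2^(y.1:ℕ) := by rw [hi]
    have e3 : k * 2^(x.1:ℕ) = k * 2^(y.1:ℕ) := by rw [hpow]
    have hsnd : (x.2:ℕ) = (y.2:ℕ) := by omega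
    exact Sigma.ext (Fin.ext hi) ((Fin.heq_ext_iff (by rw [hpow])).mpr hsnd)
  have hlow : ((M:ℝ≥0∞)+1) * ((2:ℝ≥0∞)^n)⁻¹ ≤
      ∑' I : ST, ENNReal.ofReal (dyL I.1.1) := by
    have step : (∑' x : (Σ i : Fin (M+1), Fin (2^(i:ℕ))),
        ENNReal.ofReal (dyL ((h x).1.1))) ≤ ∑' I : ST, ENNReal.ofReal (dyL I.1.1) :=
      Summable.tsum_le_tsum_of_inj h hinj (fun _ _ => zero_le) (fun _ => le_rfl)
        ENNReal.summable ENNReal.summable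
    refine le_trans (le_of_eq ?_) step
    rw [tsum_fintype]
    have : ∀ x : (Σ i : Fin (M+1), Fin (2^(i:ℕ))),
        ENNReal.ofReal (dyL ((h x).1.1)) = ((2:ℝ≥0∞)^(n+(x.1:ℕ)))⁻¹ := by
      intro x
      simp only [hh]
      rw [ofReal_dyL]
    rw [Finset.sum_congr rfl (fun x _ => this x)]
    rw [← Finset.univ_sigma_univ, Finset.sum_sigma]
    have hin : ∀ i : Fin (M+1),
        ∑ _j : Fin (2^(i:ℕ)), ((2:ℝ≥0∞)^(n+(i:ℕ)))⁻¹ = ((2:ℝ≥0∞)^n)⁻¹ := by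
      intro i
      rw [Finset.sum_const, Finset.card_univ, Fintype.card_fin, nsmul_eq_mul,
        pow2_inv_split, Nat.cast_pow, ← mul_assoc]
      push_cast
      rw [mul_right_comm, pow2_mul_inv_cancel, one_mul]
    rw [Finset.sum_congr rfl (fun i _ => hin i), Finset.sum_const, Finset.card_univ,
      Fintype.card_fin, nsmul_eq_mul]
    push_cast
    ring
  have hup := hsum n k hk
  have hCM : ENNReal.ofReal (C * dyL n) < ((M:ℝ≥0∞)+1) * ((2:ℝ≥0∞)^n)⁻¹ := by
    have hC1 : ENNReal.ofReal C < (M:ℝ≥0∞) + 1 := by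
      have he : ((M:ℝ≥0∞)+1) = ENNReal.ofReal ((M:ℝ)+1) := by
        rw [ENNReal.ofReal_add (by positivity) (by norm_num)]
        simp [ENNReal.ofReal_natCast]
      rw [he]
      rw [ENNReal.ofReal_lt_ofReal_iff (by positivity)]
      have := Nat.le_ceil C
      rw [← hM] at this
      linarith
    rw [ENNReal.ofReal_mul' (le_of_lt (dyL_pos n)), ofReal_dyL]
    exact ENNReal.mul_lt_mul_left (by simp) (by simp [ENNReal.pow_ne_top]) hC1
  exact absurd (le_trans hlow hup) (not_le.mpr hCM)
lemma porousWith_mono {E : Set ℂ} {C C' : ℝ} (h : C' ≤ C) (hp : PorousWith C E) :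
    PorousWith C' E := by
  intro a t ht0 ht1
  obtain ⟨a', t', h1, h2, h3⟩ := hp a t ht0 ht1
  refine ⟨a', t', h1, h2, lt_of_le_of_lt ?_ h3⟩
  nlinarith

lemma exists_pow_inv_le {ε : ℝ} (hε : 0 < ε) :
    ∃ d : ℕ, 0 < d ∧ ((2:ℝ)^d)⁻¹ ≤ ε := by
  obtain ⟨n, hn⟩ := exists_pow_lt_of_lt_one hε (show (1:ℝ)/2 < 1 by norm_num)
  have he : ((1:ℝ)/2)^n = ((2:ℝ)^n)⁻¹ := by rw [one_div, inv_pow]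
  refine ⟨n+1, Nat.succ_pos n, ?_⟩
  have h1 : ((2:ℝ)^(n+1))⁻¹ ≤ ((2:ℝ)^n)⁻¹ := by
    apply inv_anti₀ (by positivity)
    apply pow_le_pow_right₀ one_le_two (Nat.le_succ n)
  rw [he] at hn
  linarith

lemma exists_scale {t : ℝ} (ht0 : 0 < t) (ht1 : t ≤ 1) :
    ∃ n : ℕ, ((2:ℝ)^n)⁻¹ ≤ t/4 ∧ t/8 < ((2:ℝ)^n)⁻¹ := by
  have hex : ∃ n : ℕ, ((2:ℝ)^n)⁻¹ ≤ t/4 := by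
    obtain ⟨d, _, hd⟩ := exists_pow_inv_le (show (0:ℝ) < t/4 by positivity)
    exact ⟨d, hd⟩
  have hspec := Nat.find_spec hex
  have h0 : Nat.find hex ≠ 0 := by
    intro h
    rw [h] at hspec
    norm_num at hspec
    linarith
  have hn1 : Nat.find hex = (Nat.find hex - 1) + 1 := by omega
  have hmin : ¬ ((2:ℝ)^(Nat.find hex - 1))⁻¹ ≤ t/4 :=
    Nat.find_min hex (by omega)
  push_neg at hmin
  refine ⟨Nat.find hex, hspec, ?_⟩
  have he : (2:ℝ)^(Nat.find hex) = 2 * 2^(Nat.find hex - 1) := by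
    conv_lhs => rw [hn1]
    rw [pow_succ]; ring
  rw [he, mul_inv]
  linarith

theorem porous_iff_dyadic_sums'
    (E : Set ℂ) (hE : IsClosed E) (hEc : E ⊆ circleSet) :
    Porous E ↔
      ∃ C : ℝ, 0 < C ∧ ∀ n k : ℕ, k < 2 ^ n →
        (∑' I : {p : ℕ × ℕ // p.2 < 2 ^ p.1 ∧ dyadicArc p.1 p.2 ⊆ dyadicArc n k ∧
            (dyadicArc p.1 p.2 ∩ E).Nonempty},
          ENNReal.ofReal (dyL I.1.1)) ≤ ENNReal.ofReal (C * dyL n) := by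
  constructor
  · rintro ⟨C0, hC0, hpor0⟩
    have hC1 : 0 < min C0 (1/2) := lt_min hC0 (by norm_num)
    have hC12 : min C0 (1/2) ≤ 1/2 := min_le_right _ _
    have hpor : PorousWith (min C0 (1/2)) E := porousWith_mono (min_le_left _ _) hpor0
    obtain ⟨d, hdpos, hd⟩ := exists_pow_inv_le (show (0:ℝ) < min C0 (1/2)/4 by positivity)
    refine ⟨(d:ℝ) * 2^d, mul_pos (by exact_mod_cast hdpos) (by positivity), ?_⟩
    intro n k hk
    refine le_trans (forward_bound hC1 hC12 hpor hdpos hd hk) (le_of_eq ?_)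
    rw [ENNReal.ofReal_mul (by positivity), ofReal_dyL]
    congr 1
    rw [ENNReal.ofReal_mul (Nat.cast_nonneg d), ENNReal.ofReal_natCast,
      ENNReal.ofReal_pow (by norm_num)]
    norm_num
  · rintro ⟨C, hC, hsum⟩
    have hπ := Real.pi_pos
    refine ⟨((2:ℝ)^(⌈C⌉₊))⁻¹/16, by positivity, ?_⟩
    intro a t ht0 ht1
    obtain ⟨n, h4, h8⟩ := exists_scale ht0 ht1
    obtain ⟨A, B, hA0, hB2, hlen, hpiece⟩ := arc_contains_piece a ht0 ht1
    obtain ⟨k, hk, hsubI⟩ := exists_dyI_sub n hA0 hB2 (by nlinarith)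
    obtain ⟨i, hiM, j, hj, hfree⟩ := exists_free_subarc hsum hk
    refine ⟨dyA (n+i) (k*2^i+j), dyL (n+i), dyL_pos _, ?_, ?_⟩
    · have hchild : k*2^i ≤ k*2^i+j ∧ k*2^i+j < (k+1)*2^i := by
        have h1 : (k+1)*2^i = k*2^i + 2^i := by ring
        omega
      have hsub1 : dyadicArc (n+i) (k*2^i+j) ⊆ dyadicArc n k :=
        dyadicArc_sub_dyadicArc hchild.1 hchild.2
      have hsub2 : dyadicArc n k ⊆ arc a t := by
        rw [dyadicArc_eq_image]
        exact (Set.image_mono hsubI).trans hpiece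
      intro z hz
      refine ⟨hsub2 (hsub1 hz), fun hzE => ?_⟩
      rw [Set.eq_empty_iff_forall_notMem] at hfree
      exact hfree z ⟨hz, hzE⟩
    · unfold dyL
      have e : ((2:ℝ)^(n+i))⁻¹ = ((2:ℝ)^n)⁻¹ * ((2:ℝ)^i)⁻¹ := by
        rw [pow_add, mul_inv]
      have h1 : ((2:ℝ)^(⌈C⌉₊:ℕ))⁻¹ ≤ ((2:ℝ)^i)⁻¹ := by
        apply inv_anti₀ (by positivity)
        exact pow_le_pow_right₀ one_le_two hiM
      have p1 : (0:ℝ) < ((2:ℝ)^n)⁻¹ := by positivity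
      have p2 : (0:ℝ) < ((2:ℝ)^(⌈C⌉₊:ℕ))⁻¹ := by positivity
      rw [e]
      calc ((2:ℝ)^(⌈C⌉₊:ℕ))⁻¹/16 * t < ((2:ℝ)^(⌈C⌉₊:ℕ))⁻¹ * (t/8) := by nlinarith
        _ ≤ ((2:ℝ)^(⌈C⌉₊:ℕ))⁻¹ * ((2:ℝ)^n)⁻¹ := by nlinarith
        _ ≤ ((2:ℝ)^i)⁻¹ * ((2:ℝ)^n)⁻¹ := by nlinarith
        _ = ((2:ℝ)^n)⁻¹ * ((2:ℝ)^i)⁻¹ := mul_comm _ _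

/-- Lemma 2, (a) ⇔ (b): a closed set `E ⊆ 𝕋` is porous if and
only if there is `C > 0` such that for every dyadic arc `J`,
`Σ_{I ∈ E(J)} |I| ≤ C|J|`, where `E(J)` is the family of dyadic arcs `I ⊆ J`
meeting `E`. -/
theorem porous_iff_dyadic_sums
    (E : Set ℂ) (hE : IsClosed E) (hEc : E ⊆ circleSet) :
    Porous E ↔
      ∃ C : ℝ, 0 < C ∧ ∀ n k : ℕ, k < 2 ^ n →
        (∑' I : {p : ℕ × ℕ // p.2 < 2 ^ p.1 ∧ dyadicArc p.1 p.2 ⊆ dyadicArc n k ∧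
            (dyadicArc p.1 p.2 ∩ E).Nonempty},
          ENNReal.ofReal (dyL I.1.1)) ≤ ENNReal.ofReal (C * dyL n) :=
  porous_iff_dyadic_sums' E hE hEc

end WEPPaper
end
end

section
/- Let E be a closed subset of the unit circle with zero Lebesgue measure and finite entropy, let G be the family of maximal dyadic arcs J with 2J ⊂ T \ E, and let F be the family of dyadic arcs of T which are not contained in any arc of G. Then Σ_{J ∈ F} |J| < ∞. -/
open Complex MeasureTheory Set Filter Topology
open scoped ENNReal NNReal Real

noncomputable section

namespace WEPPaper

/-! Auxiliary development for Statement 11. -/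

def fc (t : ℝ) : ℂ := ePt (2 * Real.pi * t)

lemma fc_eq_fc_iff {s s' : ℝ} : fc s = fc s' ↔ ∃ z : ℤ, s' = s + z := by
  unfold fc ePt
  rw [Complex.exp_eq_exp_iff_exists_int]
  have hpi := Real.pi_ne_zero
  constructor
  · rintro ⟨n, hn⟩
    refine ⟨-n, ?_⟩
    have hn' : ((2 * Real.pi * s : ℝ) : ℂ) = ((2 * Real.pi * s' + n * (2 * Real.pi) : ℝ) : ℂ) := by
      apply mul_right_cancel₀ Complex.I_ne_zero
      rw [hn]; push_cast; ring
    have hr : 2 * Real.pi * s = 2 * Real.pi * s' + n * (2 * Real.pi) := by exact_mod_cast hn'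
    have h2pi : (2 * Real.pi) ≠ 0 := by positivity
    refine mul_left_cancel₀ h2pi ?_
    push_cast
    linarith
  · rintro ⟨z, hz⟩
    refine ⟨-z, ?_⟩
    subst hz
    push_cast
    ring

lemma fc_add_int (s : ℝ) (z : ℤ) : fc (s + z) = fc s := by
  rw [fc_eq_fc_iff]
  exact ⟨-z, by push_cast; ring⟩

lemma abs_fc (s : ℝ) : ‖fc s‖ = 1 := by
  unfold fc ePt
  rw [Complex.norm_exp]
  simp

lemma fc_ne_zero (s : ℝ) : fc s ≠ 0 := Complex.exp_ne_zero _

lemma fc_mem_circle (s : ℝ) : fc s ∈ circleSet := abs_fc s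

lemma fc_mul (s t : ℝ) : fc s * fc t = fc (s + t) := by
  unfold fc ePt
  rw [← Complex.exp_add]
  push_cast
  ring_nf

lemma circle_eq_fc {z : ℂ} (hz : z ∈ circleSet) : z = fc (z.arg / (2 * Real.pi)) := by
  have h2 : 2 * Real.pi * (z.arg / (2 * Real.pi)) = z.arg := by
    field_simp
  unfold fc ePt
  rw [h2]
  have := Complex.norm_mul_exp_arg_mul_I z
  rw [hz] at this
  simpa using this.symm

lemma continuous_fc : Continuous fc := by
  unfold fc ePt
  exact Complex.continuous_exp.comp (by continuity)

lemma measurable_ePt : Measurable ePt := by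
  unfold ePt
  exact (Complex.continuous_exp.comp (by continuity)).measurable

lemma arc_eq_image (a t : ℝ) :
    arc a t = fc '' Set.Ico (a / (2 * Real.pi)) (a / (2 * Real.pi) + t) := by
  have hpi : (0:ℝ) < 2 * Real.pi := by positivity
  have key : ∀ a, 2 * Real.pi * (a / (2 * Real.pi)) = a := fun a => by field_simp
  unfold arc
  have : Set.Ico a (a + 2 * Real.pi * t)
      = (fun s : ℝ => 2 * Real.pi * s) '' Set.Ico (a / (2 * Real.pi)) (a / (2 * Real.pi) + t) := by
    ext x
    constructor
    · rintro ⟨h1, h2⟩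
      refine ⟨x / (2 * Real.pi), ⟨?_, ?_⟩, key x⟩
      · rw [div_le_div_iff_of_pos_right]; exact h1; exact hpi
      · have hd : (x - a) / (2 * Real.pi) < t := by
          rw [div_lt_iff₀ hpi]; linarith
        have he : x / (2 * Real.pi) = a / (2 * Real.pi) + (x - a) / (2 * Real.pi) := by ring
        linarith
    · rintro ⟨s, ⟨h1, h2⟩, rfl⟩
      have hm1 := mul_le_mul_of_nonneg_left h1 hpi.le
      have hm2 := mul_lt_mul_of_pos_left h2 hpi
      rw [key] at hm1
      rw [mul_add, key] at hm2
      exact ⟨by simpa using hm1, by simpa using hm2⟩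
  rw [this, Set.image_image]
  rfl


/-- The real dyadic interval corresponding to a dyadic arc. -/
def dI (n k : ℕ) : Set ℝ := Set.Ico ((k : ℝ) * ((2:ℝ) ^ n)⁻¹) (((k : ℝ) + 1) * ((2:ℝ) ^ n)⁻¹)

lemma dyadicArc_eq (n k : ℕ) : dyadicArc n k = fc '' dI n k := by
  have hpi : (2 * Real.pi) ≠ 0 := by positivity
  unfold dyadicArc dI dyA dyL
  rw [arc_eq_image]
  congr 1
  have h1 : 2 * Real.pi * (k:ℝ) * ((2:ℝ) ^ n)⁻¹ / (2 * Real.pi) = (k:ℝ) * ((2:ℝ)^n)⁻¹ := by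
    field_simp
  rw [h1]
  congr 1
  ring

lemma doubleArc_eq (n k : ℕ) :
    doubleArc n k = fc '' Set.Ico (((k:ℝ) - 1/2) * ((2:ℝ) ^ n)⁻¹) (((k:ℝ) + 3/2) * ((2:ℝ) ^ n)⁻¹) := by
  have hpi : (2 * Real.pi) ≠ 0 := by positivity
  unfold doubleArc dyL
  rw [arc_eq_image]
  congr 1
  have h1 : 2 * Real.pi * ((k:ℝ) - 1/2) * ((2:ℝ) ^ n)⁻¹ / (2 * Real.pi)
      = ((k:ℝ) - 1/2) * ((2:ℝ)^n)⁻¹ := by field_simp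
  rw [h1]
  congr 1
  ring

lemma dI_subset_unit {m j : ℕ} (hj : j < 2 ^ m) : dI m j ⊆ Set.Ico (0:ℝ) 1 := by
  intro s hs
  have hpow : (0:ℝ) < (2:ℝ) ^ m := by positivity
  have hj1 : ((j:ℝ) + 1) ≤ (2:ℝ) ^ m := by
    have : (j + 1 : ℕ) ≤ 2 ^ m := hj
    calc ((j:ℝ) + 1) = ((j + 1 : ℕ) : ℝ) := by push_cast; ring
      _ ≤ ((2^m : ℕ) : ℝ) := by exact_mod_cast this
      _ = (2:ℝ) ^ m := by push_cast; ring
  obtain ⟨h1, h2⟩ := hs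
  constructor
  · have : (0:ℝ) ≤ (j:ℝ) * ((2:ℝ)^m)⁻¹ := by positivity
    linarith
  · calc s < ((j:ℝ) + 1) * ((2:ℝ)^m)⁻¹ := h2
      _ ≤ (2:ℝ)^m * ((2:ℝ)^m)⁻¹ := by
          apply mul_le_mul_of_nonneg_right hj1 (by positivity)
      _ = 1 := by field_simp

lemma dyadic_subset_iff {m j m' j' : ℕ} (hj : j < 2 ^ m) (hj' : j' < 2 ^ m') :
    dyadicArc m j ⊆ dyadicArc m' j' ↔ dI m j ⊆ dI m' j' := by
  constructor
  · intro h s hs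
    have hmem : fc s ∈ dyadicArc m' j' := by
      apply h
      rw [dyadicArc_eq]
      exact ⟨s, hs, rfl⟩
    rw [dyadicArc_eq] at hmem
    obtain ⟨s', hs', heq⟩ := hmem
    obtain ⟨z, hz⟩ := fc_eq_fc_iff.mp heq
    have h1 := dI_subset_unit hj hs
    have h2 := dI_subset_unit hj' hs'
    have hz0 : z = 0 := by
      have hlt : ((z:ℝ)) < 1 ∧ (-1:ℝ) < (z:ℝ) := by
        constructor <;> [nlinarith [h1.1, h1.2, h2.1, h2.2]; nlinarith [h1.1, h1.2, h2.1, h2.2]]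
      have : (z : ℝ) < 1 := hlt.1
      have h2' : (-1 : ℝ) < (z:ℝ) := hlt.2
      have : z < 1 := by exact_mod_cast this
      have h2'' : (-1 : ℤ) < z := by exact_mod_cast h2'
      omega
    rw [hz0] at hz
    simp at hz
    rwa [hz]
  · intro h
    rw [dyadicArc_eq, dyadicArc_eq]
    exact Set.image_mono h

lemma dI_nonempty_lt (m j : ℕ) : (j:ℝ) * ((2:ℝ)^m)⁻¹ < ((j:ℝ) + 1) * ((2:ℝ)^m)⁻¹ := by
  have : (0:ℝ) < ((2:ℝ)^m)⁻¹ := by positivity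
  nlinarith

lemma exists_maxGood (E : Set ℂ) {n k : ℕ} (h : (n, k) ∈ goodDy E) :
    ∃ r ∈ maxGoodDy E, dyadicArc n k ⊆ dyadicArc r.1 r.2 := by
  classical
  have hP : ∃ m : ℕ, ∃ j, (m, j) ∈ goodDy E ∧ dyadicArc n k ⊆ dyadicArc m j :=
    ⟨n, k, h, subset_rfl⟩
  let m := Nat.find hP
  obtain ⟨j, hgood, hsub⟩ : ∃ j, (m, j) ∈ goodDy E ∧ dyadicArc n k ⊆ dyadicArc m j :=
    Nat.find_spec hP
  refine ⟨(m, j), ⟨hgood, ?_⟩, hsub⟩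
  rintro ⟨m', j'⟩ hq hsubq
  have hreal : dI m j ⊆ dI m' j' := (dyadic_subset_iff hgood.1 hq.1).mp hsubq
  rw [dI, dI, Set.Ico_subset_Ico_iff (dI_nonempty_lt m j)] at hreal
  obtain ⟨ha, hb⟩ := hreal
  -- lengths: 2^{-m} ≤ 2^{-m'}
  have hlen : ((2:ℝ)^m)⁻¹ ≤ ((2:ℝ)^m')⁻¹ := by nlinarith [ha, hb]
  have hm'le : m' ≤ m := by
    by_contra hc
    push_neg at hc
    have : ((2:ℝ)^m')⁻¹ < ((2:ℝ)^m)⁻¹ := by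
      apply inv_strictAnti₀ (by positivity)
      exact pow_lt_pow_right₀ (by norm_num) hc
    linarith
  have hmle : m ≤ m' := by
    apply Nat.find_min' hP
    exact ⟨j', hq, subset_trans hsub hsubq⟩
  have hmm : m = m' := le_antisymm hmle hm'le
  subst hmm
  have hj : j = j' := by
    have hpos : (0:ℝ) < ((2:ℝ)^m)⁻¹ := by positivity
    have : (j':ℝ) = (j:ℝ) := by
      have h1 : (j':ℝ) * ((2:ℝ)^m)⁻¹ ≤ (j:ℝ) * ((2:ℝ)^m)⁻¹ := ha
      have h2 : ((j:ℝ)+1) * ((2:ℝ)^m)⁻¹ ≤ ((j':ℝ)+1) * ((2:ℝ)^m)⁻¹ := hb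
      nlinarith
    exact_mod_cast this.symm
  subst hj
  rfl

lemma doubleArc_subset_circle (n k : ℕ) : doubleArc n k ⊆ circleSet := by
  rw [doubleArc_eq]
  rintro z ⟨s, _, rfl⟩
  exact fc_mem_circle s

lemma bad_to_B (E : Set ℂ) {n k : ℕ} (hk : k < 2 ^ n)
    (hb : ¬ ∃ r ∈ maxGoodDy E, dyadicArc n k ⊆ dyadicArc r.1 r.2) :
    ∃ s : ℝ, fc s ∈ E ∧ ((k:ℝ) - 1/2) * ((2:ℝ)^n)⁻¹ ≤ s ∧ s ≤ ((k:ℝ) + 3/2) * ((2:ℝ)^n)⁻¹ := by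
  have hng : (n, k) ∉ goodDy E := fun hg => hb (exists_maxGood E hg)
  have hnsub : ¬ doubleArc n k ⊆ circleSet \ E := by
    intro hc
    exact hng ⟨hk, hc⟩
  rw [Set.not_subset] at hnsub
  obtain ⟨x, hx, hxE⟩ := hnsub
  have hxc : x ∈ circleSet := doubleArc_subset_circle n k hx
  have hxE' : x ∈ E := by
    by_contra hcon
    exact hxE ⟨hxc, hcon⟩
  rw [doubleArc_eq] at hx
  obtain ⟨s, ⟨h1, h2⟩, rfl⟩ := hx
  exact ⟨s, hxE', h1, h2.le⟩


lemma volume_image_add (a : ℝ) (s : Set ℝ) : volume ((fun x => x + a) '' s) = volume s := by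
  have : (fun x : ℝ => x + a) '' s = (fun x : ℝ => x - a) ⁻¹' s := by
    ext x
    constructor
    · rintro ⟨y, hy, rfl⟩; simpa [Set.mem_preimage] using hy
    · intro h; exact ⟨x - a, h, by ring⟩
  rw [this]
  rw [show (fun x : ℝ => x - a) = (fun x : ℝ => x + (-a)) from funext fun x => by ring]
  rw [measure_preimage_add_right]

lemma circleMeasure_apply {S : Set ℂ} (hS : MeasurableSet S) :
    circleMeasure S
      = (ENNReal.ofReal (2 * Real.pi))⁻¹ * volume (ePt ⁻¹' S ∩ Set.Ico 0 (2 * Real.pi)) := by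
  unfold circleMeasure
  rw [Measure.smul_apply, Measure.map_apply measurable_ePt hS,
    Measure.restrict_apply (measurable_ePt hS)]
  rfl

lemma int_eq_of_cast_bounds {z w : ℤ} (h1 : (z:ℝ) - (w:ℝ) < 1) (h2 : (-1:ℝ) < (z:ℝ) - (w:ℝ)) :
    z = w := by
  have h1' : z - w < 1 := by exact_mod_cast h1
  have h2' : (-1 : ℤ) < z - w := by exact_mod_cast h2
  omega

lemma periodization {T : ℝ} (hT : 0 < T) {c : ℝ} {S : Set ℝ} (hSm : MeasurableSet S)
    (hSc : S ⊆ Set.Ico c (c + T)) :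
    volume ((⋃ z : ℤ, (fun x => x + T * z) '' S) ∩ Set.Ico 0 T) = volume S := by
  set K : ℤ := ⌊c / T⌋ with hK
  have hKle : (K : ℝ) * T ≤ c := by
    rw [hK]
    have := Int.floor_le (c / T)
    calc ((⌊c / T⌋ : ℝ)) * T ≤ (c / T) * T := by nlinarith
      _ = c := by field_simp
  have hKgt : c < ((K : ℝ) + 1) * T := by
    rw [hK]
    have := Int.lt_floor_add_one (c / T)
    calc c = (c / T) * T := by field_simp
      _ < ((⌊c / T⌋ : ℝ) + 1) * T := by nlinarith
  set m : ℝ := ((K : ℝ) + 1) * T with hm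
  set S₁ : Set ℝ := S ∩ Set.Ico c m with hS1
  set S₂ : Set ℝ := S ∩ Set.Ico m (c + T) with hS2
  set A₁ : Set ℝ := (fun x => x + T * (-K : ℤ)) '' S₁ with hA1
  set A₂ : Set ℝ := (fun x => x + T * (-(K + 1) : ℤ)) '' S₂ with hA2
  have hc0 : (0:ℝ) ≤ c - K * T := by linarith
  have hsplit : S = S₁ ∪ S₂ := by
    rw [hS1, hS2, ← Set.inter_union_distrib_left]
    rw [Set.Ico_union_Ico_eq_Ico (by linarith) (by linarith)]
    exact (Set.inter_eq_left.mpr hSc).symm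
  have hA1sub : A₁ ⊆ Set.Ico (c - K * T) T := by
    rintro x ⟨y, ⟨hyS, hy1, hy2⟩, rfl⟩
    push_cast
    constructor <;> [linarith; nlinarith [hy2]]
  have hA2sub : A₂ ⊆ Set.Ico 0 (c - K * T) := by
    rintro x ⟨y, ⟨hyS, hy1, hy2⟩, rfl⟩
    push_cast
    constructor <;> [nlinarith [hy1]; nlinarith [hy2]]
  have hunion : (⋃ z : ℤ, (fun x => x + T * z) '' S) ∩ Set.Ico 0 T = A₁ ∪ A₂ := by
    apply Set.Subset.antisymm
    · rintro x ⟨hx, hx0, hxT⟩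
      obtain ⟨_, ⟨z, rfl⟩, s, hsS, rfl⟩ := hx
      have hx0' : (0:ℝ) ≤ s + T * (z:ℝ) := hx0
      have hxT' : s + T * (z:ℝ) < T := hxT
      by_cases hcase : s < m
      · left
        have hs1 : s ∈ S₁ := ⟨hsS, (hSc hsS).1, hcase⟩
        have hy := hA1sub ⟨s, hs1, rfl⟩
        have hy1 : c - (K:ℝ) * T ≤ s + T * ((-K : ℤ):ℝ) := hy.1
        have hy2 : s + T * ((-K : ℤ):ℝ) < T := hy.2
        push_cast at hy1 hy2
        have hz : z = -K := by
          apply int_eq_of_cast_bounds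
          · have hmul : ((z:ℝ) - ((-K:ℤ):ℝ)) * T < 1 * T := by push_cast; linarith
            exact lt_of_mul_lt_mul_right hmul hT.le
          · have hmul : (-1:ℝ) * T < ((z:ℝ) - ((-K:ℤ):ℝ)) * T := by push_cast; linarith
            have := lt_of_mul_lt_mul_right hmul hT.le
            linarith
        show s + T * (z:ℝ) ∈ A₁
        rw [show ((z:ℝ)) = ((-K : ℤ):ℝ) by rw [hz]]
        exact ⟨s, hs1, rfl⟩
      · right
        push_neg at hcase
        have hs2 : s ∈ S₂ := ⟨hsS, hcase, (hSc hsS).2⟩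
        have hy := hA2sub ⟨s, hs2, rfl⟩
        have hy1 : (0:ℝ) ≤ s + T * ((-(K+1) : ℤ):ℝ) := hy.1
        have hy2 : s + T * ((-(K+1) : ℤ):ℝ) < c - (K:ℝ) * T := hy.2
        push_cast at hy1 hy2
        have hz : z = -(K+1) := by
          apply int_eq_of_cast_bounds
          · have hmul : ((z:ℝ) - ((-(K+1):ℤ):ℝ)) * T < 1 * T := by push_cast; linarith
            exact lt_of_mul_lt_mul_right hmul hT.le
          · have hmul : (-1:ℝ) * T < ((z:ℝ) - ((-(K+1):ℤ):ℝ)) * T := by push_cast; linarith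
            have := lt_of_mul_lt_mul_right hmul hT.le
            linarith
        show s + T * (z:ℝ) ∈ A₂
        rw [show ((z:ℝ)) = ((-(K+1) : ℤ):ℝ) by rw [hz]]
        exact ⟨s, hs2, rfl⟩
    · rintro x (hx | hx)
      · obtain ⟨s, hs, rfl⟩ := hx
        refine ⟨Set.mem_iUnion.mpr ⟨-K, ⟨s, hs.1, rfl⟩⟩, ?_⟩
        have := hA1sub ⟨s, hs, rfl⟩
        exact ⟨by linarith [this.1], this.2⟩
      · obtain ⟨s, hs, rfl⟩ := hx
        refine ⟨Set.mem_iUnion.mpr ⟨-(K+1), ⟨s, hs.1, rfl⟩⟩, ?_⟩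
        have := hA2sub ⟨s, hs, rfl⟩
        exact ⟨this.1, by linarith [this.2]⟩
  rw [hunion]
  have hdisj : Disjoint A₁ A₂ := by
    apply Set.disjoint_left.mpr
    intro x hx1 hx2
    have h1 := hA1sub hx1
    have h2 := hA2sub hx2
    exact absurd h1.1 (not_le.mpr h2.2)
  have hm1 : MeasurableSet S₁ := hSm.inter measurableSet_Ico
  have hm2 : MeasurableSet S₂ := hSm.inter measurableSet_Ico
  have hmA2 : MeasurableSet A₂ := by
    rw [hA2, Set.image_add_right]
    exact hm2.preimage (measurable_add_const _)
  rw [measure_union hdisj hmA2, hA1, hA2, volume_image_add, volume_image_add]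
  rw [hsplit, measure_union _ hm2]
  · rw [hS1, hS2]
    apply Set.disjoint_left.mpr
    rintro x ⟨_, _, hxm⟩ ⟨_, hmx, _⟩
    exact absurd hmx (not_le.mpr hxm)

lemma ePt_eq_fc (θ : ℝ) : ePt θ = fc (θ / (2 * Real.pi)) := by
  unfold fc
  congr 1
  field_simp

lemma twopi_mem_scale {u v x : ℝ} :
    x ∈ Set.Ioo (2 * Real.pi * u) (2 * Real.pi * v) ↔ x / (2 * Real.pi) ∈ Set.Ioo u v := by
  have hpi : (0:ℝ) < 2 * Real.pi := by positivity
  constructor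
  · rintro ⟨h1, h2⟩
    constructor
    · rw [lt_div_iff₀ hpi]; linarith
    · rw [div_lt_iff₀ hpi]; linarith
  · rintro ⟨h1, h2⟩
    rw [lt_div_iff₀ hpi] at h1
    rw [div_lt_iff₀ hpi] at h2
    exact ⟨by linarith, by linarith⟩

lemma preimage_fc_Ioo (u v : ℝ) :
    ePt ⁻¹' (fc '' Set.Ioo u v)
      = ⋃ z : ℤ, (fun x => x + 2 * Real.pi * z) '' Set.Ioo (2 * Real.pi * u) (2 * Real.pi * v) := by
  have hpi : (0:ℝ) < 2 * Real.pi := by positivity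
  ext θ
  simp only [Set.mem_preimage, Set.mem_iUnion, Set.mem_image]
  constructor
  · rintro ⟨s, hs, heq⟩
    have h2 : fc s = fc (θ / (2 * Real.pi)) := by rw [heq, ePt_eq_fc]
    obtain ⟨z, hz⟩ := fc_eq_fc_iff.mp h2
    refine ⟨z, 2 * Real.pi * s, ?_, ?_⟩
    · exact ⟨by nlinarith [hs.1], by nlinarith [hs.2]⟩
    · have hpi' : (2 * Real.pi) ≠ 0 := by positivity
      have hth : θ = 2 * Real.pi * (s + z) := by
        rw [div_eq_iff hpi'] at hz
        rw [hz]; ring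
      rw [hth]; ring
  · rintro ⟨z, x, hx, rfl⟩
    refine ⟨x / (2 * Real.pi), twopi_mem_scale.mp hx, ?_⟩
    rw [ePt_eq_fc]
    rw [show (x + 2 * Real.pi * z) / (2 * Real.pi) = x / (2 * Real.pi) + z by field_simp]
    rw [fc_add_int]

lemma fc_endpoints_not_mem {u v : ℝ} (h1 : v ≤ u + 1) :
    fc u ∉ fc '' Set.Ioo u v ∧ fc v ∉ fc '' Set.Ioo u v := by
  constructor
  · rintro ⟨s, ⟨hs1, hs2⟩, heq⟩
    obtain ⟨z, hz⟩ := fc_eq_fc_iff.mp heq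
    -- u = s + z, s ∈ (u, v), v ≤ u + 1
    have hz1 : (z : ℝ) < 0 := by linarith [hz]
    have hz2 : (-1 : ℝ) < (z : ℝ) := by linarith [hz]
    have : z < 0 := by exact_mod_cast hz1
    have : (-1 : ℤ) < z := by exact_mod_cast hz2
    omega
  · rintro ⟨s, ⟨hs1, hs2⟩, heq⟩
    obtain ⟨z, hz⟩ := fc_eq_fc_iff.mp heq
    have hz1 : (0 : ℝ) < (z : ℝ) := by linarith [hz]
    have hz2 : (z : ℝ) < 1 := by linarith [hz]
    have : 0 < z := by exact_mod_cast hz1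
    have : z < 1 := by exact_mod_cast hz2
    omega

lemma measurableSet_fc_Ioo {u v : ℝ} (h1 : v ≤ u + 1) : MeasurableSet (fc '' Set.Ioo u v) := by
  rcases le_or_gt v u with h | h
  · rw [Set.Ioo_eq_empty (not_lt.mpr h)]
    simp
  · have heq : fc '' Set.Ioo u v = (fc '' Set.Icc u v) \ {fc u, fc v} := by
      apply Set.Subset.antisymm
      · rintro z ⟨s, hs, rfl⟩
        refine ⟨⟨s, Set.Ioo_subset_Icc_self hs, rfl⟩, ?_⟩
        intro hmem
        rcases hmem with h' | h'
        · exact (fc_endpoints_not_mem h1).1 ⟨s, hs, h'⟩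
        · exact (fc_endpoints_not_mem h1).2 ⟨s, hs, Set.mem_singleton_iff.mp h'⟩
      · rintro z ⟨⟨s, hs, rfl⟩, hne⟩
        simp only [Set.mem_insert_iff, Set.mem_singleton_iff, not_or] at hne
        refine ⟨s, ⟨?_, ?_⟩, rfl⟩
        · rcases lt_or_eq_of_le hs.1 with h' | h'
          · exact h'
          · exact absurd (congrArg fc h').symm hne.1
        · rcases lt_or_eq_of_le hs.2 with h' | h'
          · exact h'
          · exact absurd (congrArg fc h') hne.2
    rw [heq]
    apply MeasurableSet.diff
    · exact (isCompact_Icc.image continuous_fc).isClosed.measurableSet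
    · exact (Set.Finite.insert _ (Set.finite_singleton _)).measurableSet

lemma circleMeasure_fc_Ioo {u v : ℝ} (h0 : u ≤ v) (h1 : v ≤ u + 1) :
    circleMeasure (fc '' Set.Ioo u v) = ENNReal.ofReal (v - u) := by
  have hpi : (0:ℝ) < 2 * Real.pi := by positivity
  rw [circleMeasure_apply (measurableSet_fc_Ioo h1), preimage_fc_Ioo]
  rw [periodization hpi measurableSet_Ioo (Set.Ioo_subset_Ico_self.trans (Set.Ico_subset_Ico_right (by nlinarith)))]
  rw [Real.volume_Ioo]
  rw [show 2 * Real.pi * v - 2 * Real.pi * u = (2 * Real.pi) * (v - u) by ring]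
  rw [ENNReal.ofReal_mul hpi.le, ← mul_assoc, ENNReal.inv_mul_cancel, one_mul]
  · simp [hpi, Real.pi_pos]
  · exact ENNReal.ofReal_ne_top

lemma len_fc_Ioo {u v : ℝ} (h0 : u ≤ v) (h1 : v ≤ u + 1) :
    len (fc '' Set.Ioo u v) = v - u := by
  rw [len, circleMeasure_fc_Ioo h0 h1, ENNReal.toReal_ofReal (by linarith)]

lemma B_null {E : Set ℂ} (hEm : MeasurableSet E) (hzero : circleMeasure E = 0) :
    volume ({t : ℝ | fc t ∈ E} ∩ Set.Ico 0 1) = 0 := by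
  have hpi : (0:ℝ) < 2 * Real.pi := by positivity
  have h1 : volume (ePt ⁻¹' E ∩ Set.Ico 0 (2 * Real.pi)) = 0 := by
    have := (circleMeasure_apply hEm).symm.trans hzero
    have hne : (ENNReal.ofReal (2 * Real.pi))⁻¹ ≠ 0 := by
      exact ENNReal.inv_ne_zero.mpr ENNReal.ofReal_ne_top
    rcases mul_eq_zero.mp this with h | h
    · exact absurd h hne
    · exact h
  have heq : {t : ℝ | fc t ∈ E} ∩ Set.Ico 0 1
      = (fun x : ℝ => 2 * Real.pi * x) ⁻¹' (ePt ⁻¹' E ∩ Set.Ico 0 (2 * Real.pi)) := by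
    ext t
    simp only [Set.mem_inter_iff, Set.mem_preimage, Set.mem_setOf_eq, Set.mem_Ico]
    constructor
    · rintro ⟨h, h0, h1'⟩
      exact ⟨h, by positivity, by nlinarith⟩
    · rintro ⟨h, h0, h1'⟩
      refine ⟨h, ?_, ?_⟩
      · nlinarith
      · nlinarith
  rw [heq, Real.volume_preimage_mul_left (by positivity : (2*Real.pi) ≠ 0), h1, mul_zero]


/-! ### Sectors and connected components -/

def sector (u v : ℝ) : Set ℂ :=
  {z : ℂ | z ≠ 0 ∧ Complex.arg (z * fc (-(u+v)/2)) ∈ Set.Ioo (-(Real.pi*(v-u))) (Real.pi*(v-u))}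

lemma mem_slitPlane_of_ne {z : ℂ} (h0 : z ≠ 0) (h1 : Complex.arg z ≠ Real.pi) :
    z ∈ Complex.slitPlane := by
  rw [Complex.mem_slitPlane_iff]
  by_contra hc
  push_neg at hc
  rcases lt_or_eq_of_le hc.1 with h | h
  · exact h1 (Complex.arg_eq_pi_iff.mpr ⟨h, hc.2⟩)
  · refine h0 (Complex.ext ?_ ?_)
    · simpa using h
    · simpa using hc.2

lemma sector_isOpen {u v : ℝ} (h0 : 0 < v - u) (h1 : v - u < 1) : IsOpen (sector u v) := by
  have hpi := Real.pi_pos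
  set c := fc (-(u+v)/2) with hc
  set S : Set ℂ := Complex.slitPlane ∩
    Complex.arg ⁻¹' Set.Ioo (-(Real.pi*(v-u))) (Real.pi*(v-u)) with hS
  have hSopen : IsOpen S := by
    rw [isOpen_iff_mem_nhds]
    rintro w ⟨hw1, hw2⟩
    exact Filter.inter_mem (Complex.isOpen_slitPlane.mem_nhds hw1)
      ((Complex.continuousAt_arg hw1).preimage_mem_nhds (Ioo_mem_nhds hw2.1 hw2.2))
  have heq : sector u v = (fun z => z * c) ⁻¹' S := by
    ext z
    simp only [sector, Set.mem_setOf_eq, Set.mem_preimage, hS, Set.mem_inter_iff,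
      Set.mem_preimage]
    constructor
    · rintro ⟨hz0, hz1⟩
      refine ⟨mem_slitPlane_of_ne (mul_ne_zero hz0 (fc_ne_zero _)) ?_, hz1⟩
      intro hp
      rw [hp] at hz1
      have : Real.pi * (v - u) < Real.pi := by nlinarith
      exact absurd hz1.2 (by linarith)
    · rintro ⟨hw, hz1⟩
      refine ⟨?_, hz1⟩
      intro hz0
      rw [hz0, zero_mul] at hw
      simpa using (Complex.mem_slitPlane_iff.mp hw)
  rw [heq]
  exact hSopen.preimage (continuous_id.mul continuous_const)

lemma arg_fc {σ : ℝ} (h1 : -(1:ℝ)/2 < σ) (h2 : σ < 1/2) :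
    (fc σ).arg = 2 * Real.pi * σ := by
  have hpi := Real.pi_pos
  have hkey : fc σ = Complex.cos ((2*Real.pi*σ : ℝ) : ℂ) + Complex.sin ((2*Real.pi*σ : ℝ) : ℂ) * Complex.I := by
    unfold fc ePt
    exact Complex.exp_mul_I _
  rw [hkey]
  exact Complex.arg_cos_add_sin_mul_I ⟨by nlinarith, by nlinarith⟩

lemma arg_fc_mem_iff {σ d : ℝ} (hd0 : 0 < d) (hd1 : d < 1) :
    (fc σ).arg ∈ Set.Ioo (-(Real.pi*d)) (Real.pi*d) ↔
      ∃ k : ℤ, σ - k ∈ Set.Ioo (-(d/2)) (d/2) := by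
  have hpi := Real.pi_pos
  constructor
  · intro h
    have habs : ‖fc σ‖ = 1 := abs_fc σ
    have hzeq : fc σ = fc ((fc σ).arg / (2 * Real.pi)) := circle_eq_fc (fc_mem_circle σ)
    obtain ⟨z, hz⟩ := fc_eq_fc_iff.mp hzeq.symm
    -- hz : σ = (arg)/(2π) + z
    refine ⟨z, ?_⟩
    have h1 : -(Real.pi*d) < (fc σ).arg := h.1
    have h2 : (fc σ).arg < Real.pi*d := h.2
    have hσ : σ - z = (fc σ).arg / (2*Real.pi) := by linarith [hz]
    rw [hσ]
    constructor
    · rw [lt_div_iff₀ (by positivity : (0:ℝ) < 2*Real.pi)]; nlinarith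
    · rw [div_lt_iff₀ (by positivity : (0:ℝ) < 2*Real.pi)]; nlinarith
  · rintro ⟨k, hk1, hk2⟩
    have hfc : fc σ = fc (σ - k) := by
      rw [fc_eq_fc_iff]
      exact ⟨-k, by push_cast; ring⟩
    rw [hfc, arg_fc (by nlinarith) (by nlinarith)]
    constructor
    · nlinarith
    · nlinarith

lemma sector_mem_iff {u v : ℝ} (h0 : 0 < v - u) (h1 : v - u < 1) (z : ℂ) :
    z ∈ sector u v ↔ z ≠ 0 ∧ ∃ k : ℤ, z.arg / (2*Real.pi) - k ∈ Set.Ioo u v := by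
  have hpi := Real.pi_pos
  constructor
  · rintro ⟨hz0, hz1⟩
    refine ⟨hz0, ?_⟩
    have habs : 0 < ‖z‖ := by
      simpa [norm_pos_iff] using hz0
    have hzw : z = (‖z‖ : ℂ) * fc (z.arg / (2*Real.pi)) := by
      have h2 : 2 * Real.pi * (z.arg / (2 * Real.pi)) = z.arg := by field_simp
      unfold fc ePt
      rw [h2]
      exact (Complex.norm_mul_exp_arg_mul_I z).symm
    have harg : (z * fc (-(u+v)/2)).arg = (fc (z.arg / (2*Real.pi) + -(u+v)/2)).arg := by
      rw [← fc_mul]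
      conv_lhs => rw [hzw]
      rw [mul_assoc]
      exact Complex.arg_real_mul _ habs
    rw [harg] at hz1
    rw [arg_fc_mem_iff h0 h1] at hz1
    obtain ⟨k, hk1, hk2⟩ := hz1
    refine ⟨k, ?_, ?_⟩ <;> [linarith; linarith]
  · rintro ⟨hz0, k, hk1, hk2⟩
    refine ⟨hz0, ?_⟩
    have habs : 0 < ‖z‖ := by
      simpa [norm_pos_iff] using hz0
    have hzw : z = (‖z‖ : ℂ) * fc (z.arg / (2*Real.pi)) := by
      have h2 : 2 * Real.pi * (z.arg / (2 * Real.pi)) = z.arg := by field_simp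
      unfold fc ePt
      rw [h2]
      exact (Complex.norm_mul_exp_arg_mul_I z).symm
    have harg : (z * fc (-(u+v)/2)).arg = (fc (z.arg / (2*Real.pi) + -(u+v)/2)).arg := by
      rw [← fc_mul]
      conv_lhs => rw [hzw]
      rw [mul_assoc]
      exact Complex.arg_real_mul _ habs
    rw [harg, arg_fc_mem_iff h0 h1]
    exact ⟨k, by constructor <;> [linarith; linarith]⟩

lemma fc_mem_sector_iff {u v : ℝ} (h0 : 0 < v - u) (h1 : v - u < 1) (s : ℝ) :
    fc s ∈ sector u v ↔ ∃ k : ℤ, s - k ∈ Set.Ioo u v := by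
  rw [sector_mem_iff h0 h1]
  obtain ⟨z₀, hz₀⟩ := fc_eq_fc_iff.mp (circle_eq_fc (fc_mem_circle s))
  -- hz₀ : (fc s).arg / (2π) = s + z₀
  constructor
  · rintro ⟨-, k, hk1, hk2⟩
    rw [hz₀] at hk1 hk2
    exact ⟨k - z₀, by push_cast; constructor <;> [linarith; linarith]⟩
  · rintro ⟨k, hk1, hk2⟩
    refine ⟨fc_ne_zero s, k + z₀, ?_⟩
    rw [hz₀]
    push_cast
    constructor <;> [linarith; linarith]

lemma sector_inter_circle {u v : ℝ} (h0 : 0 < v - u) (h1 : v - u < 1) :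
    circleSet ∩ sector u v = fc '' Set.Ioo u v := by
  apply Set.Subset.antisymm
  · rintro z ⟨hzc, hzs⟩
    rw [circle_eq_fc hzc] at hzs ⊢
    obtain ⟨k, hk⟩ := (fc_mem_sector_iff h0 h1 _).mp hzs
    refine ⟨_, hk, ?_⟩
    have heq2 : fc (z.arg / (2*Real.pi) - k) = fc (z.arg / (2*Real.pi)) :=
      fc_eq_fc_iff.mpr ⟨k, by ring⟩
    rw [heq2]
  · rintro z ⟨s, hs, rfl⟩
    exact ⟨fc_mem_circle s, (fc_mem_sector_iff h0 h1 s).mpr ⟨0, by simpa using hs⟩⟩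

lemma sector_disjoint {a b : ℝ} (hab : a < b) (hb1 : b < a + 1) :
    Disjoint (sector a b) (sector b (a+1)) := by
  rw [Set.disjoint_left]
  intro z hz1 hz2
  obtain ⟨-, k, hk1, hk2⟩ := (sector_mem_iff (by linarith) (by linarith) z).mp hz1
  obtain ⟨-, k', hk1', hk2'⟩ := (sector_mem_iff (by linarith) (by linarith) z).mp hz2
  have h1 : (0:ℝ) < (k:ℝ) - k' := by linarith
  have h2 : ((k:ℝ) - k') < 1 := by linarith
  have h1' : (0:ℤ) < k - k' := by exact_mod_cast h1
  have h2' : k - k' < 1 := by exact_mod_cast h2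
  omega

lemma circle_diff_subset_sectors {E : Set ℂ} {a b : ℝ} (ha : fc a ∈ E) (hb : fc b ∈ E)
    (hab : a < b) (hb1 : b < a + 1) :
    circleSet \ E ⊆ sector a b ∪ sector b (a+1) := by
  rintro z ⟨hzc, hzE⟩
  set t₀ := z.arg / (2*Real.pi) with ht₀
  have hz : z = fc t₀ := circle_eq_fc hzc
  set k : ℤ := ⌊t₀ - a⌋ with hk
  set s : ℝ := t₀ - k with hs
  have hs1 : a ≤ s := by
    have := Int.floor_le (t₀ - a)
    rw [hs, hk]; linarith
  have hs2 : s < a + 1 := by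
    have := Int.lt_floor_add_one (t₀ - a)
    rw [hs, hk]; linarith
  have hfs : fc s = z := by
    rw [hz, hs, fc_eq_fc_iff]
    exact ⟨k, by ring⟩
  have hsa : s ≠ a := by
    intro h
    rw [← hfs, h] at hzE
    exact hzE ha
  have hsb : s ≠ b := by
    intro h
    rw [← hfs, h] at hzE
    exact hzE hb
  rcases lt_or_gt_of_ne hsb with h | h
  · left
    rw [hz]
    exact (fc_mem_sector_iff (by linarith) (by linarith) t₀).mpr
      ⟨k, lt_of_le_of_ne hs1 (Ne.symm hsa), h⟩
  · right
    rw [hz]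
    exact (fc_mem_sector_iff (by linarith) (by linarith) t₀).mpr ⟨k, h, hs2⟩

lemma component_eq_arc {E : Set ℂ} {a b x : ℝ} (ha : fc a ∈ E) (hb : fc b ∈ E)
    (hab : a < b) (hb1 : b ≤ a + 1) (hfree : ∀ t ∈ Set.Ioo a b, fc t ∉ E)
    (hx : x ∈ Set.Ioo a b) :
    connectedComponentIn (circleSet \ E) (fc x) = fc '' Set.Ioo a b := by
  have hxE : fc x ∈ circleSet \ E := ⟨fc_mem_circle x, hfree x hx⟩
  have harc_sub : fc '' Set.Ioo a b ⊆ circleSet \ E := by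
    rintro z ⟨s, hs, rfl⟩
    exact ⟨fc_mem_circle s, hfree s hs⟩
  have hpre : IsPreconnected (fc '' Set.Ioo a b) :=
    isPreconnected_Ioo.image _ continuous_fc.continuousOn
  have h1 : fc '' Set.Ioo a b ⊆ connectedComponentIn (circleSet \ E) (fc x) :=
    hpre.subset_connectedComponentIn ⟨x, hx, rfl⟩ harc_sub
  refine Set.Subset.antisymm ?_ h1
  rcases eq_or_lt_of_le hb1 with hdeg | hlt
  · -- b = a + 1 : the component is everything
    refine (connectedComponentIn_subset _ _).trans ?_
    rintro z ⟨hzc, hzE⟩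
    set t₀ := z.arg / (2*Real.pi) with ht₀
    have hz : z = fc t₀ := circle_eq_fc hzc
    set k : ℤ := ⌊t₀ - a⌋ with hk
    set s : ℝ := t₀ - k with hs
    have hs1 : a ≤ s := by
      have := Int.floor_le (t₀ - a)
      rw [hs, hk]; linarith
    have hs2 : s < a + 1 := by
      have := Int.lt_floor_add_one (t₀ - a)
      rw [hs, hk]; linarith
    have hfs : fc s = z := by
      rw [hz, hs, fc_eq_fc_iff]
      exact ⟨k, by ring⟩
    have hsa : s ≠ a := by
      intro h
      rw [← hfs, h] at hzE
      exact hzE ha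
    exact ⟨s, ⟨lt_of_le_of_ne hs1 (Ne.symm hsa), by rw [hdeg]; exact hs2⟩, hfs⟩
  · -- b < a + 1 : sector argument
    set K := connectedComponentIn (circleSet \ E) (fc x) with hKdef
    have hKpre : IsPreconnected K := isPreconnected_connectedComponentIn
    have hKsub : K ⊆ sector a b ∪ sector b (a+1) :=
      (connectedComponentIn_subset _ _).trans (circle_diff_subset_sectors ha hb hab hlt)
    have hxU : fc x ∈ sector a b :=
      (fc_mem_sector_iff (by linarith) (by linarith) x).mpr ⟨0, by simpa using hx⟩
    have hKU : K ⊆ sector a b := by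
      by_contra hc
      rw [Set.not_subset] at hc
      obtain ⟨y, hyK, hyU⟩ := hc
      have hyV : y ∈ sector b (a+1) := by
        rcases hKsub hyK with h | h
        · exact absurd h hyU
        · exact h
      have := hKpre (sector a b) (sector b (a+1))
        (sector_isOpen (by linarith) (by linarith))
        (sector_isOpen (by linarith) (by linarith))
        hKsub ⟨fc x, mem_connectedComponentIn hxE, hxU⟩ ⟨y, hyK, hyV⟩
      obtain ⟨w, hwK, hwU, hwV⟩ := this
      exact Set.disjoint_left.mp (sector_disjoint hab hlt) hwU hwV
    intro z hzK
    have hzc : z ∈ circleSet := ((connectedComponentIn_subset _ _) hzK).1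
    have : z ∈ circleSet ∩ sector a b := ⟨hzc, hKU hzK⟩
    rw [sector_inter_circle (by linarith) (by linarith)] at this
    exact this


/-! ### Gaps of the preimage set -/

def Bset (E : Set ℂ) : Set ℝ := {t : ℝ | fc t ∈ E}

def gapSet (E : Set ℂ) : Set (ℝ × ℝ) :=
  {p : ℝ × ℝ | p.1 ∈ Bset E ∧ p.2 ∈ Bset E ∧ p.1 < p.2 ∧
    Set.Ioo p.1 p.2 ∩ Bset E = ∅ ∧ (Set.Ioo p.1 p.2 ∩ Set.Icc 0 1).Nonempty}

lemma Bset_add_int {E : Set ℂ} {t : ℝ} (h : t ∈ Bset E) (z : ℤ) : t + z ∈ Bset E := by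
  have : fc (t + z) = fc t := fc_add_int t z
  simpa [Bset, this] using h

lemma gap_le_one {E : Set ℂ} {p : ℝ × ℝ} (hp : p ∈ gapSet E) : p.2 - p.1 ≤ 1 := by
  by_contra hc
  push_neg at hc
  have h1 : p.1 + (1:ℤ) ∈ Bset E := Bset_add_int hp.1 1
  have h2 : p.1 + (1:ℤ) ∈ Set.Ioo p.1 p.2 := by
    push_cast
    constructor <;> [linarith; linarith]
  have := hp.2.2.2.1
  rw [Set.eq_empty_iff_forall_notMem] at this
  exact this _ ⟨h2, h1⟩

lemma gap_unique' {E : Set ℂ} {a b a' b' x : ℝ} (ha : a ∈ Bset E) (hb : b ∈ Bset E)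
    (ha' : a' ∈ Bset E) (hb' : b' ∈ Bset E)
    (hf : Set.Ioo a b ∩ Bset E = ∅) (hf' : Set.Ioo a' b' ∩ Bset E = ∅)
    (hxp : x ∈ Set.Ioo a b) (hxq : x ∈ Set.Ioo a' b') : a = a' ∧ b = b' := by
  rw [Set.eq_empty_iff_forall_notMem] at hf hf'
  have h11 : a' ≤ a := by
    by_contra hc
    push_neg at hc
    exact hf a' ⟨⟨hc, lt_trans hxq.1 hxp.2⟩, ha'⟩
  have h12 : a ≤ a' := by
    by_contra hc
    push_neg at hc
    exact hf' a ⟨⟨hc, lt_trans hxp.1 hxq.2⟩, ha⟩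
  have h21 : b' ≤ b := by
    by_contra hc
    push_neg at hc
    exact hf' b ⟨⟨lt_trans hxq.1 hxp.2, hc⟩, hb⟩
  have h22 : b ≤ b' := by
    by_contra hc
    push_neg at hc
    exact hf b' ⟨⟨lt_trans hxp.1 hxq.2, hc⟩, hb'⟩
  exact ⟨le_antisymm h12 h11, le_antisymm h22 h21⟩

lemma gap_unique {E : Set ℂ} {p q : ℝ × ℝ} (hp : p ∈ gapSet E) (hq : q ∈ gapSet E)
    {x : ℝ} (hxp : x ∈ Set.Ioo p.1 p.2) (hxq : x ∈ Set.Ioo q.1 q.2) : p = q := by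
  obtain ⟨h1, h2⟩ := gap_unique' hp.1 hp.2.1 hq.1 hq.2.1 hp.2.2.2.1 hq.2.2.2.1 hxp hxq
  exact Prod.ext h1 h2

lemma gap_subset_Icc {E : Set ℂ} {p : ℝ × ℝ} (hp : p ∈ gapSet E) :
    Set.Ioo p.1 p.2 ⊆ Set.Icc (-1 : ℝ) 2 := by
  obtain ⟨x, hx, hx01⟩ := hp.2.2.2.2
  have hlen := gap_le_one hp
  intro y hy
  constructor
  · have : p.1 > -1 := by
      by_contra hc
      push_neg at hc
      have : x < 1 + -1 + 1 := by linarith [hx.2, hx.1]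
      linarith [hx01.1, hx.1, hlen, hx.2]
    linarith [hy.1]
  · have : p.2 < 2 := by
      by_contra hc
      push_neg at hc
      linarith [hx01.2, hx.1, hx.2, hlen]
    linarith [hy.2]

lemma exists_gap {E : Set ℂ} (hE : IsClosed E) (hne : (Bset E).Nonempty)
    {x : ℝ} (hx : x ∉ Bset E) (hx01 : x ∈ Set.Icc (0:ℝ) 1) :
    ∃ p ∈ gapSet E, x ∈ Set.Ioo p.1 p.2 := by
  have hBc : IsClosed (Bset E) := hE.preimage continuous_fc
  obtain ⟨b₀, hb₀⟩ := hne
  -- elements below and above x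
  have hbelow : (Bset E ∩ Set.Iic x).Nonempty := by
    refine ⟨b₀ + (-⌈b₀ - x⌉ : ℤ), Bset_add_int hb₀ _, ?_⟩
    have := Int.le_ceil (b₀ - x)
    simp only [Set.mem_Iic]
    push_cast
    linarith
  have habove : (Bset E ∩ Set.Ici x).Nonempty := by
    refine ⟨b₀ + (⌈x - b₀⌉ : ℤ), Bset_add_int hb₀ _, ?_⟩
    have := Int.le_ceil (x - b₀)
    simp only [Set.mem_Ici]
    linarith
  set a := sSup (Bset E ∩ Set.Iic x) with ha
  set b := sInf (Bset E ∩ Set.Ici x) with hb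
  have haMem : a ∈ Bset E ∩ Set.Iic x :=
    (hBc.inter isClosed_Iic).csSup_mem hbelow (BddAbove.inter_of_right bddAbove_Iic)
  have hbMem : b ∈ Bset E ∩ Set.Ici x :=
    (hBc.inter isClosed_Ici).csInf_mem habove (BddBelow.inter_of_right bddBelow_Ici)
  have hax : a < x := lt_of_le_of_ne haMem.2 (fun h => hx (by rw [← h]; exact haMem.1))
  have hxb : x < b := lt_of_le_of_ne hbMem.2 (fun h => hx (by rw [h]; exact hbMem.1))
  refine ⟨(a, b), ⟨haMem.1, hbMem.1, lt_trans hax hxb, ?_, ⟨x, ⟨hax, hxb⟩, hx01⟩⟩, hax, hxb⟩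
  rw [Set.eq_empty_iff_forall_notMem]
  rintro t ⟨⟨hta, htb⟩, htB⟩
  rcases le_or_gt t x with h | h
  · have : t ≤ a := le_csSup (BddAbove.inter_of_right bddAbove_Iic) ⟨htB, h⟩
    linarith
  · have : b ≤ t := csInf_le (BddBelow.inter_of_right bddBelow_Ici) ⟨htB, h.le⟩
    linarith


lemma gapSet_countable (E : Set ℂ) : (gapSet E).Countable := by
  classical
  rw [← Set.countable_coe_iff]
  have hch : ∀ p : ↥(gapSet E), ∃ q : ℚ, (q:ℝ) ∈ Set.Ioo (p : ℝ × ℝ).1 (p : ℝ × ℝ).2 := by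
    rintro ⟨p, hp⟩
    obtain ⟨q, hq1, hq2⟩ := exists_rat_btwn hp.2.2.1
    exact ⟨q, hq1, hq2⟩
  choose F hF using hch
  have hinj : Function.Injective F := by
    intro p q h
    apply Subtype.ext
    exact gap_unique p.2 q.2 (hF p) (by rw [h]; exact hF q)
  exact Function.Injective.countable hinj

lemma gap_fst_bounds {E : Set ℂ} {p : ℝ × ℝ} (hp : p ∈ gapSet E) :
    -1 < p.1 ∧ p.1 < 1 := by
  obtain ⟨x, hx, hx01⟩ := hp.2.2.2.2
  have hlen := gap_le_one hp
  constructor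
  · linarith [hx.2, hx01.1]
  · linarith [hx.1, hx01.2]

lemma gap_translate {E : Set ℂ} {p q : ℝ × ℝ} (hp : p ∈ gapSet E) (hq : q ∈ gapSet E)
    (him : fc '' Set.Ioo p.1 p.2 = fc '' Set.Ioo q.1 q.2) :
    q = p ∨ q = (p.1 + 1, p.2 + 1) ∨ q = (p.1 - 1, p.2 - 1) := by
  set x := (q.1 + q.2)/2 with hxdef
  have hxq : x ∈ Set.Ioo q.1 q.2 := ⟨by have := hq.2.2.1; linarith, by have := hq.2.2.1; linarith⟩
  have hxmem : fc x ∈ fc '' Set.Ioo p.1 p.2 := by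
    rw [him]; exact ⟨x, hxq, rfl⟩
  obtain ⟨s, hs, heq⟩ := hxmem
  obtain ⟨z, hz⟩ := fc_eq_fc_iff.mp heq
  -- x = s + z
  have hxp' : x ∈ Set.Ioo (p.1 + z) (p.2 + z) := by
    rw [hz]
    exact ⟨by linarith [hs.1], by linarith [hs.2]⟩
  have hfree' : Set.Ioo (p.1 + (z:ℝ)) (p.2 + (z:ℝ)) ∩ Bset E = ∅ := by
    rw [Set.eq_empty_iff_forall_notMem]
    rintro t ⟨⟨ht1, ht2⟩, htB⟩
    have : t + (-z : ℤ) ∈ Bset E := Bset_add_int htB (-z)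
    have hmem : t + ((-z : ℤ) : ℝ) ∈ Set.Ioo p.1 p.2 ∩ Bset E := by
      refine ⟨⟨?_, ?_⟩, this⟩ <;> [push_cast; push_cast] <;> linarith
    rw [hp.2.2.2.1] at hmem
    exact hmem
  obtain ⟨h1, h2⟩ := gap_unique' (Bset_add_int hp.1 z) (Bset_add_int hp.2.1 z)
    hq.1 hq.2.1 hfree' hq.2.2.2.1 hxp' hxq
  -- q.1 = p.1 + z, q.2 = p.2 + z
  have hb1 := gap_fst_bounds hp
  have hb2 := gap_fst_bounds hq
  have hz1 : (z:ℝ) < 2 := by linarith [hb1.1, hb2.2, h1]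
  have hz2 : (-2:ℝ) < (z:ℝ) := by linarith [hb1.2, hb2.1, h1]
  have hz1' : z < 2 := by exact_mod_cast hz1
  have hz2' : (-2:ℤ) < z := by exact_mod_cast hz2
  interval_cases z
  · right; right
    refine Prod.ext ?_ ?_ <;> [skip; skip] <;>
      (first | (show q.1 = p.1 - 1; rw [← h1]; push_cast; ring)
             | (show q.2 = p.2 - 1; rw [← h2]; push_cast; ring))
  · left
    refine Prod.ext ?_ ?_
    · rw [← h1]; push_cast; ring
    · rw [← h2]; push_cast; ring
  · right; left
    refine Prod.ext ?_ ?_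
    · rw [← h1]; push_cast; ring
    · rw [← h2]; push_cast; ring

lemma gap_component {E : Set ℂ} {p : ℝ × ℝ} (hp : p ∈ gapSet E) :
    connectedComponentIn (circleSet \ E) (fc ((p.1 + p.2)/2)) = fc '' Set.Ioo p.1 p.2 := by
  have hfree : ∀ t ∈ Set.Ioo p.1 p.2, fc t ∉ E := by
    intro t ht htE
    have : t ∈ Set.Ioo p.1 p.2 ∩ Bset E := ⟨ht, htE⟩
    rw [hp.2.2.2.1] at this
    exact this
  exact component_eq_arc hp.1 hp.2.1 hp.2.2.1 (by linarith [gap_le_one hp]) hfree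
    ⟨by have := hp.2.2.1; linarith, by have := hp.2.2.1; linarith⟩

lemma gap_mem_components {E : Set ℂ} {p : ℝ × ℝ} (hp : p ∈ gapSet E) :
    fc '' Set.Ioo p.1 p.2 ∈ components (circleSet \ E) := by
  refine ⟨fc ((p.1 + p.2)/2), ⟨fc_mem_circle _, ?_⟩, (gap_component hp).symm⟩
  intro hE
  have : (p.1 + p.2)/2 ∈ Set.Ioo p.1 p.2 ∩ Bset E := by
    refine ⟨⟨?_, ?_⟩, hE⟩ <;> (have := hp.2.2.1; linarith)
  rw [hp.2.2.2.1] at this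
  exact this

lemma gap_len {E : Set ℂ} {p : ℝ × ℝ} (hp : p ∈ gapSet E) :
    len (fc '' Set.Ioo p.1 p.2) = p.2 - p.1 :=
  len_fc_Ioo hp.2.2.1.le (by linarith [gap_le_one hp])

lemma entropy_sum_bound {E : Set ℂ} (M : ℝ)
    (hM : ∀ F : Finset (Set ℂ), (↑F : Set (Set ℂ)) ⊆ components (circleSet \ E) →
      ∑ V ∈ F, len V * Real.log (1 / len V) ≤ M)
    (F : Finset (ℝ × ℝ)) (hF : (↑F : Set (ℝ × ℝ)) ⊆ gapSet E) :
    ∑ p ∈ F, (p.2 - p.1) * Real.log (1 / (p.2 - p.1)) ≤ 3 * M := by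
  classical
  set Ψ : ℝ × ℝ → Set ℂ := fun p => fc '' Set.Ioo p.1 p.2 with hΨ
  set g : Set ℂ → ℝ := fun V => len V * Real.log (1 / len V) with hg
  have hterm : ∀ p ∈ F, (p.2 - p.1) * Real.log (1 / (p.2 - p.1)) = g (Ψ p) := by
    intro p hpF
    rw [hg, hΨ]
    simp only
    rw [gap_len (hF hpF)]
  rw [Finset.sum_congr rfl hterm]
  rw [← Finset.sum_fiberwise_of_maps_to (fun p hp => Finset.mem_image_of_mem Ψ hp)
    (fun p => g (Ψ p))]
  have hgnn : ∀ V ∈ F.image Ψ, 0 ≤ g V := by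
    intro V hV
    obtain ⟨p, hpF, rfl⟩ := Finset.mem_image.mp hV
    have hp := hF hpF
    rw [hg, hΨ]
    simp only
    rw [gap_len hp]
    apply mul_nonneg (by linarith [hp.2.2.1])
    apply Real.log_nonneg
    rw [le_div_iff₀ (by linarith [hp.2.2.1] : (0:ℝ) < p.2 - p.1)]
    linarith [gap_le_one hp]
  have hcard : ∀ V ∈ F.image Ψ, (F.filter (fun p => Ψ p = V)).card ≤ 3 := by
    intro V hV
    obtain ⟨p₀, hp₀F, hp₀V⟩ := Finset.mem_image.mp hV
    have hsub : F.filter (fun p => Ψ p = V) ⊆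
        insert (p₀.1 - 1, p₀.2 - 1) (insert (p₀.1 + 1, p₀.2 + 1) {p₀}) := by
      intro q hq
      obtain ⟨hqF, hqV⟩ := Finset.mem_filter.mp hq
      have := gap_translate (hF hp₀F) (hF hqF) (by rw [show fc '' Set.Ioo p₀.1 p₀.2 = Ψ p₀ from rfl, hp₀V, ← hqV])
      simp only [Finset.mem_insert, Finset.mem_singleton]
      rcases this with h | h | h
      · right; right; exact h
      · right; left; exact h
      · left; exact h
    calc (F.filter (fun p => Ψ p = V)).card
        ≤ (insert (p₀.1 - 1, p₀.2 - 1) (insert (p₀.1 + 1, p₀.2 + 1) ({p₀} : Finset (ℝ × ℝ)))).card :=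
          Finset.card_le_card hsub
      _ ≤ 3 := by
          apply le_trans (Finset.card_insert_le _ _)
          have := Finset.card_insert_le (p₀.1 + 1, p₀.2 + 1) ({p₀} : Finset (ℝ × ℝ))
          simp only [Finset.card_singleton] at this
          omega
  calc ∑ V ∈ F.image Ψ, ∑ p ∈ F.filter (fun p => Ψ p = V), g (Ψ p)
      ≤ ∑ V ∈ F.image Ψ, 3 * g V := by
        apply Finset.sum_le_sum
        intro V hV
        have hconst : ∀ p ∈ F.filter (fun p => Ψ p = V), g (Ψ p) = g V := by
          intro p hp
          rw [(Finset.mem_filter.mp hp).2]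
        rw [Finset.sum_congr rfl hconst, Finset.sum_const, nsmul_eq_mul]
        apply mul_le_mul_of_nonneg_right _ (hgnn V hV)
        exact_mod_cast hcard V hV
    _ = 3 * ∑ V ∈ F.image Ψ, g V := by rw [Finset.mul_sum]
    _ ≤ 3 * M := by
        apply mul_le_mul_of_nonneg_left _ (by norm_num)
        apply hM
        intro V hV
        obtain ⟨p, hpF, rfl⟩ := Finset.mem_image.mp (by exact_mod_cast hV)
        exact gap_mem_components (hF hpF)


/-! ### Summation estimates -/

lemma tsum_len_le (E : Set ℂ) :
    ∑' p : ↥(gapSet E), ENNReal.ofReal ((p : ℝ × ℝ).2 - (p : ℝ × ℝ).1) ≤ 3 := by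
  rw [ENNReal.tsum_eq_iSup_sum]
  apply iSup_le
  intro G
  have h1 : ∀ q ∈ G, ENNReal.ofReal ((q : ℝ × ℝ).2 - (q : ℝ × ℝ).1)
      = volume (Set.Ioo (q : ℝ × ℝ).1 (q : ℝ × ℝ).2) := by
    intro q _
    rw [Real.volume_Ioo]
  rw [Finset.sum_congr rfl h1]
  rw [← measure_biUnion_finset ?_ (fun q _ => measurableSet_Ioo)]
  · calc volume (⋃ q ∈ G, Set.Ioo (q : ℝ × ℝ).1 (q : ℝ × ℝ).2)
        ≤ volume (Set.Icc (-1:ℝ) 2) := by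
          apply measure_mono
          apply Set.iUnion₂_subset
          intro q _
          exact gap_subset_Icc q.2
      _ = ENNReal.ofReal 3 := by rw [Real.volume_Icc]; norm_num
      _ ≤ 3 := by
          rw [show ((3:ℝ≥0∞)) = ENNReal.ofReal ((3:ℕ):ℝ) by rw [ENNReal.ofReal_natCast]; norm_num]
          apply ENNReal.ofReal_le_ofReal
          norm_num
  · intro q _ q' _ hne
    rw [Function.onFun]
    rw [Set.disjoint_left]
    intro x hx hx'
    exact hne (Subtype.ext (gap_unique q.2 q'.2 hx hx'))

lemma tsum_entropy_le {E : Set ℂ} (M : ℝ)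
    (hM : ∀ F : Finset (Set ℂ), (↑F : Set (Set ℂ)) ⊆ components (circleSet \ E) →
      ∑ V ∈ F, len V * Real.log (1 / len V) ≤ M) :
    ∑' p : ↥(gapSet E),
        ENNReal.ofReal (((p : ℝ × ℝ).2 - (p : ℝ × ℝ).1) * Real.log (1 / ((p : ℝ × ℝ).2 - (p : ℝ × ℝ).1)))
      ≤ ENNReal.ofReal (3 * M) := by
  classical
  rw [ENNReal.tsum_eq_iSup_sum]
  apply iSup_le
  intro G
  have hinj : ∀ x ∈ G, ∀ y ∈ G, (x : ℝ × ℝ) = (y : ℝ × ℝ) → x = y := by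
    intro x _ y _ h
    exact Subtype.ext h
  have himg : (↑(G.image (Subtype.val : ↥(gapSet E) → ℝ × ℝ)) : Set (ℝ × ℝ)) ⊆ gapSet E := by
    intro p hp
    simp only [Finset.coe_image, Set.mem_image, Finset.mem_coe] at hp
    obtain ⟨q, -, rfl⟩ := hp
    exact q.2
  have hnn : ∀ q : ↥(gapSet E),
      0 ≤ ((q : ℝ × ℝ).2 - (q : ℝ × ℝ).1) * Real.log (1 / ((q : ℝ × ℝ).2 - (q : ℝ × ℝ).1)) := by
    intro q
    have hq := q.2
    apply mul_nonneg (by linarith [hq.2.2.1])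
    apply Real.log_nonneg
    rw [le_div_iff₀ (by linarith [hq.2.2.1] : (0:ℝ) < (q : ℝ × ℝ).2 - (q : ℝ × ℝ).1)]
    linarith [gap_le_one hq]
  calc ∑ q ∈ G, ENNReal.ofReal
          (((q : ℝ × ℝ).2 - (q : ℝ × ℝ).1) * Real.log (1 / ((q : ℝ × ℝ).2 - (q : ℝ × ℝ).1)))
      = ENNReal.ofReal (∑ q ∈ G,
          (((q : ℝ × ℝ).2 - (q : ℝ × ℝ).1) * Real.log (1 / ((q : ℝ × ℝ).2 - (q : ℝ × ℝ).1)))) :=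
        (ENNReal.ofReal_sum_of_nonneg (fun q _ => hnn q)).symm
    _ ≤ ENNReal.ofReal (3 * M) := by
        apply ENNReal.ofReal_le_ofReal
        have hkey := entropy_sum_bound M hM (G.image Subtype.val) himg
        rw [Finset.sum_image hinj] at hkey
        exact hkey

lemma thick_le {E : Set ℂ} (hE : IsClosed E) (hBne : (Bset E).Nonempty)
    (hzero : circleMeasure E = 0) {t : ℝ} :
    volume {x : ℝ | x ∈ Set.Icc (0:ℝ) 1 ∧ ∃ s ∈ Bset E, |x - s| ≤ t}
      ≤ ∑' p : ↥(gapSet E),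
          volume (Set.Ioo (p : ℝ × ℝ).1 (p : ℝ × ℝ).2 ∩
            (Set.Iic ((p : ℝ × ℝ).1 + t) ∪ Set.Ici ((p : ℝ × ℝ).2 - t))) := by
  set G : ℝ × ℝ → Set ℝ := fun p =>
    Set.Ioo p.1 p.2 ∩ (Set.Iic (p.1 + t) ∪ Set.Ici (p.2 - t)) with hG
  have hcov : {x : ℝ | x ∈ Set.Icc (0:ℝ) 1 ∧ ∃ s ∈ Bset E, |x - s| ≤ t}
      ⊆ (Bset E ∩ Set.Icc 0 1) ∪ ⋃ p ∈ gapSet E, G p := by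
    rintro x ⟨hx01, s, hsB, hdist⟩
    by_cases hxB : x ∈ Bset E
    · left; exact ⟨hxB, hx01⟩
    · right
      obtain ⟨p, hp, hxIoo⟩ := exists_gap hE hBne hxB hx01
      refine Set.mem_biUnion hp ⟨hxIoo, ?_⟩
      have hsnot : s ∉ Set.Ioo p.1 p.2 := by
        intro hc
        have : s ∈ Set.Ioo p.1 p.2 ∩ Bset E := ⟨hc, hsB⟩
        rw [hp.2.2.2.1] at this
        exact this
      rw [Set.mem_Ioo, not_and_or, not_lt, not_lt] at hsnot
      obtain ⟨hd1, hd2⟩ := abs_le.mp hdist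
      rcases hsnot with h | h
      · left
        simp only [Set.mem_Iic]
        linarith
      · right
        simp only [Set.mem_Ici]
        linarith
  calc volume {x : ℝ | x ∈ Set.Icc (0:ℝ) 1 ∧ ∃ s ∈ Bset E, |x - s| ≤ t}
      ≤ volume ((Bset E ∩ Set.Icc 0 1) ∪ ⋃ p ∈ gapSet E, G p) := measure_mono hcov
    _ ≤ volume (Bset E ∩ Set.Icc 0 1) + volume (⋃ p ∈ gapSet E, G p) := measure_union_le _ _
    _ ≤ 0 + ∑' p : ↥(gapSet E), volume (G p) := by
        apply add_le_add
        · have hsub : Bset E ∩ Set.Icc 0 1 ⊆ (Bset E ∩ Set.Ico 0 1) ∪ {1} := by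
            rintro x ⟨hxB, hx0, hx1⟩
            rcases lt_or_eq_of_le hx1 with h | h
            · left; exact ⟨hxB, hx0, h⟩
            · right; exact h
          calc volume (Bset E ∩ Set.Icc 0 1) ≤ volume ((Bset E ∩ Set.Ico 0 1) ∪ {1}) :=
                measure_mono hsub
            _ ≤ volume (Bset E ∩ Set.Ico 0 1) + volume ({1} : Set ℝ) := measure_union_le _ _
            _ = 0 := by
                rw [show (Bset E ∩ Set.Ico 0 1) = ({t : ℝ | fc t ∈ E} ∩ Set.Ico (0:ℝ) 1) from rfl]
                rw [B_null hE.measurableSet hzero, Real.volume_singleton, add_zero]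
        · exact measure_biUnion_le volume (gapSet_countable E) G
    _ = ∑' p : ↥(gapSet E), volume (G p) := by rw [zero_add]

lemma Gp_le_min {a b t : ℝ} (hab : a ≤ b) (ht : 0 ≤ t) :
    volume (Set.Ioo a b ∩ (Set.Iic (a + t) ∪ Set.Ici (b - t)))
      ≤ min (ENNReal.ofReal (b - a)) (ENNReal.ofReal (2 * t)) := by
  apply le_min
  · calc volume (Set.Ioo a b ∩ _) ≤ volume (Set.Ioo a b) := measure_mono Set.inter_subset_left
      _ = ENNReal.ofReal (b - a) := Real.volume_Ioo
  · have hsub : Set.Ioo a b ∩ (Set.Iic (a + t) ∪ Set.Ici (b - t))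
        ⊆ Set.Ioc a (a + t) ∪ Set.Ico (b - t) b := by
      rintro x ⟨hx, hmem⟩
      rcases hmem with h | h
      · left; exact ⟨hx.1, h⟩
      · right; exact ⟨h, hx.2⟩
    calc volume (Set.Ioo a b ∩ _) ≤ volume (Set.Ioc a (a + t) ∪ Set.Ico (b - t) b) :=
          measure_mono hsub
      _ ≤ volume (Set.Ioc a (a + t)) + volume (Set.Ico (b - t) b) := measure_union_le _ _
      _ = ENNReal.ofReal t + ENNReal.ofReal t := by
          rw [Real.volume_Ioc, Real.volume_Ico]
          congr 1 <;> [congr 1; congr 1] <;> ring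
      _ ≤ ENNReal.ofReal (2 * t) := by
          rw [← ENNReal.ofReal_add ht ht]
          apply ENNReal.ofReal_le_ofReal
          linarith

lemma geom_sum_bound {l : ℝ} (h0 : 0 < l) (h1 : l ≤ 1) :
    ∑' n : ℕ, min (ENNReal.ofReal l) (ENNReal.ofReal (4 * ((2:ℝ)^n)⁻¹))
      ≤ ENNReal.ofReal (9 * l) + ENNReal.ofReal ((Real.log 2)⁻¹ * (l * Real.log (1/l))) := by
  classical
  have hlog2 : 0 < Real.log 2 := Real.log_pos (by norm_num)
  have h1l : (1:ℝ) ≤ 1 / l := by rw [le_div_iff₀ h0]; linarith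
  have hlognn : 0 ≤ Real.log (1/l) := Real.log_nonneg h1l
  set N : ℕ := ⌈Real.log (1/l) / Real.log 2⌉₊ with hN
  have hNbound : (N:ℝ) < Real.log (1/l) / Real.log 2 + 1 := Nat.ceil_lt_add_one (by positivity)
  have h2N : ((2:ℝ)^N)⁻¹ ≤ l := by
    have hle : Real.log (1/l) / Real.log 2 ≤ (N:ℝ) := Nat.le_ceil _
    have hlogle : Real.log (1/l) ≤ (N:ℝ) * Real.log 2 := by
      rw [div_le_iff₀ hlog2] at hle
      linarith
    have hpow : Real.log (1/l) ≤ Real.log ((2:ℝ)^N) := by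
      rw [Real.log_pow]
      exact hlogle
    have h2 : (1:ℝ)/l ≤ (2:ℝ)^N :=
      (Real.log_le_log_iff (by positivity) (by positivity)).mp hpow
    rw [inv_le_comm₀ (by positivity) h0, ← one_div]
    exact h2
  have hpt : ∀ n : ℕ, min (ENNReal.ofReal l) (ENNReal.ofReal (4 * ((2:ℝ)^n)⁻¹))
      ≤ (if n < N then ENNReal.ofReal l else 0)
        + (if N ≤ n then ENNReal.ofReal (4 * ((2:ℝ)^n)⁻¹) else 0) := by
    intro n
    by_cases h : n < N
    · rw [if_pos h, if_neg (not_le.mpr h), add_zero]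
      exact min_le_left _ _
    · rw [if_neg h, if_pos (not_lt.mp h), zero_add]
      exact min_le_right _ _
  calc ∑' n : ℕ, min (ENNReal.ofReal l) (ENNReal.ofReal (4 * ((2:ℝ)^n)⁻¹))
      ≤ ∑' n : ℕ, ((if n < N then ENNReal.ofReal l else 0)
        + (if N ≤ n then ENNReal.ofReal (4 * ((2:ℝ)^n)⁻¹) else 0)) := ENNReal.tsum_le_tsum hpt
    _ = (∑' n : ℕ, if n < N then ENNReal.ofReal l else 0)
        + ∑' n : ℕ, (if N ≤ n then ENNReal.ofReal (4 * ((2:ℝ)^n)⁻¹) else 0) := ENNReal.tsum_add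
    _ ≤ (ENNReal.ofReal ((Real.log 2)⁻¹ * (l * Real.log (1/l))) + ENNReal.ofReal l)
        + ENNReal.ofReal (8 * l) := by
        apply add_le_add
        · have hsum : (∑' n : ℕ, if n < N then ENNReal.ofReal l else 0)
              = ∑ n ∈ Finset.range N, (if n < N then ENNReal.ofReal l else 0) := by
            apply tsum_eq_sum
            intro b hb
            rw [if_neg (by simpa using hb)]
          rw [hsum]
          have : ∀ n ∈ Finset.range N, (if n < N then ENNReal.ofReal l else 0) = ENNReal.ofReal l := by
            intro n hn
            rw [if_pos (Finset.mem_range.mp hn)]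
          rw [Finset.sum_congr rfl this, Finset.sum_const, Finset.card_range, nsmul_eq_mul]
          calc (N : ℝ≥0∞) * ENNReal.ofReal l
              = ENNReal.ofReal ((N:ℝ) * l) := by
                rw [ENNReal.ofReal_mul (by positivity), ENNReal.ofReal_natCast]
            _ ≤ ENNReal.ofReal ((Real.log 2)⁻¹ * (l * Real.log (1/l)) + l) := by
                apply ENNReal.ofReal_le_ofReal
                have hNl : (N:ℝ) * l ≤ (Real.log (1/l) / Real.log 2 + 1) * l :=
                  mul_le_mul_of_nonneg_right hNbound.le h0.le
                calc (N:ℝ) * l ≤ (Real.log (1/l) / Real.log 2 + 1) * l := hNl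
                  _ = (Real.log 2)⁻¹ * (l * Real.log (1/l)) + l := by ring
            _ = ENNReal.ofReal ((Real.log 2)⁻¹ * (l * Real.log (1/l))) + ENNReal.ofReal l := by
                rw [ENNReal.ofReal_add (by positivity) h0.le]
        · have hsupp : Function.support
              (fun n : ℕ => if N ≤ n then ENNReal.ofReal (4 * ((2:ℝ)^n)⁻¹) else 0)
              ⊆ Set.range (fun m : ℕ => m + N) := by
            intro n hn
            rcases le_or_gt N n with h | h
            · exact ⟨n - N, by simp; omega⟩
            · exact absurd (if_neg (not_le.mpr h)) hn
          have hinj : Function.Injective (fun m : ℕ => m + N) := fun a b h => by simpa using h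
          rw [← Function.Injective.tsum_eq hinj hsupp]
          have heach : ∀ m : ℕ,
              (if N ≤ m + N then ENNReal.ofReal (4 * ((2:ℝ)^(m+N))⁻¹) else 0)
                = ENNReal.ofReal (4 * ((2:ℝ)^N)⁻¹) * ENNReal.ofReal (((2:ℝ)^m)⁻¹) := by
            intro m
            rw [if_pos (Nat.le_add_left N m)]
            rw [← ENNReal.ofReal_mul (by positivity)]
            congr 1
            rw [pow_add, mul_inv]
            ring
          calc (∑' m : ℕ, if N ≤ m + N then ENNReal.ofReal (4 * ((2:ℝ)^(m+N))⁻¹) else 0)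
              = ∑' m : ℕ, ENNReal.ofReal (4 * ((2:ℝ)^N)⁻¹) * ENNReal.ofReal (((2:ℝ)^m)⁻¹) :=
                tsum_congr heach
            _ = ENNReal.ofReal (4 * ((2:ℝ)^N)⁻¹) * ∑' m : ℕ, ENNReal.ofReal (((2:ℝ)^m)⁻¹) :=
                ENNReal.tsum_mul_left
            _ ≤ ENNReal.ofReal (8 * l) := by
                have hgeo : (∑' m : ℕ, ENNReal.ofReal (((2:ℝ)^m)⁻¹)) = 2 := by
                  have hconv : ∀ m : ℕ, ENNReal.ofReal (((2:ℝ)^m)⁻¹) = (2⁻¹ : ℝ≥0∞)^m := by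
                    intro m
                    rw [← inv_pow, ENNReal.ofReal_pow (by norm_num),
                      ENNReal.ofReal_inv_of_pos (by norm_num), ENNReal.ofReal_ofNat]
                  rw [tsum_congr hconv, ENNReal.tsum_geometric, ENNReal.one_sub_inv_two, inv_inv]
                rw [hgeo]
                calc ENNReal.ofReal (4 * ((2:ℝ)^N)⁻¹) * 2
                    = ENNReal.ofReal (8 * ((2:ℝ)^N)⁻¹) := by
                      rw [show (2:ℝ≥0∞) = ENNReal.ofReal 2 from (ENNReal.ofReal_ofNat 2).symm,
                        ← ENNReal.ofReal_mul (by positivity)]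
                      congr 1
                      ring
                  _ ≤ ENNReal.ofReal (8 * l) := ENNReal.ofReal_le_ofReal (by nlinarith [h2N])
    _ = ENNReal.ofReal (9 * l) + ENNReal.ofReal ((Real.log 2)⁻¹ * (l * Real.log (1/l))) := by
        have hcomb : ENNReal.ofReal l + ENNReal.ofReal (8*l) = ENNReal.ofReal (9*l) := by
          rw [← ENNReal.ofReal_add h0.le (by positivity)]
          congr 1
          ring
        rw [add_assoc, hcomb, add_comm]


def badK (E : Set ℂ) (n : ℕ) : Finset ℕ :=
  @Finset.filter ℕ
    (fun k => ∃ s ∈ Bset E,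
      ((k:ℝ) - 1/2) * ((2:ℝ)^n)⁻¹ ≤ s ∧ s ≤ ((k:ℝ) + 3/2) * ((2:ℝ)^n)⁻¹)
    (Classical.decPred _) (Finset.range (2^n))

lemma mem_badK {E : Set ℂ} {n k : ℕ} :
    k ∈ badK E n ↔ k < 2^n ∧ ∃ s ∈ Bset E,
      ((k:ℝ) - 1/2) * ((2:ℝ)^n)⁻¹ ≤ s ∧ s ≤ ((k:ℝ) + 3/2) * ((2:ℝ)^n)⁻¹ := by
  classical
  simp only [badK, Finset.mem_filter, Finset.mem_range]

lemma count_le_thick (E : Set ℂ) (n : ℕ) :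
    ((badK E n).card : ℝ≥0∞) * ENNReal.ofReal (((2:ℝ)^n)⁻¹)
      ≤ volume {x : ℝ | x ∈ Set.Icc (0:ℝ) 1 ∧ ∃ s ∈ Bset E, |x - s| ≤ 2 * ((2:ℝ)^n)⁻¹} := by
  have hpos : (0:ℝ) < ((2:ℝ)^n)⁻¹ := by positivity
  have hsum : ((badK E n).card : ℝ≥0∞) * ENNReal.ofReal (((2:ℝ)^n)⁻¹)
      = ∑ k ∈ badK E n, volume (Set.Ioo ((k:ℝ) * ((2:ℝ)^n)⁻¹) (((k:ℝ)+1) * ((2:ℝ)^n)⁻¹)) := by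
    have hterm : ∀ k ∈ badK E n,
        volume (Set.Ioo ((k:ℝ) * ((2:ℝ)^n)⁻¹) (((k:ℝ)+1) * ((2:ℝ)^n)⁻¹))
          = ENNReal.ofReal (((2:ℝ)^n)⁻¹) := by
      intro k _
      rw [Real.volume_Ioo]
      congr 1
      ring
    rw [Finset.sum_congr rfl hterm, Finset.sum_const, nsmul_eq_mul]
  rw [hsum, ← measure_biUnion_finset ?_ (fun k _ => measurableSet_Ioo)]
  · apply measure_mono
    apply Set.iUnion₂_subset
    intro k hk
    obtain ⟨hklt, s, hsB, hs1, hs2⟩ := mem_badK.mp hk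
    rintro x ⟨hx1, hx2⟩
    have hx01 := dI_subset_unit hklt (show x ∈ dI n k from ⟨hx1.le, hx2⟩)
    refine ⟨⟨hx01.1, hx01.2.le⟩, s, hsB, abs_le.mpr ⟨?_, ?_⟩⟩
    · have : s ≤ (k:ℝ) * ((2:ℝ)^n)⁻¹ + (3/2) * ((2:ℝ)^n)⁻¹ := by
        calc s ≤ ((k:ℝ) + 3/2) * ((2:ℝ)^n)⁻¹ := hs2
          _ = (k:ℝ) * ((2:ℝ)^n)⁻¹ + (3/2) * ((2:ℝ)^n)⁻¹ := by ring
      linarith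
    · have : ((k:ℝ) - 1/2) * ((2:ℝ)^n)⁻¹ = (k:ℝ) * ((2:ℝ)^n)⁻¹ - (1/2) * ((2:ℝ)^n)⁻¹ := by ring
      have hx2' : x < (k:ℝ) * ((2:ℝ)^n)⁻¹ + ((2:ℝ)^n)⁻¹ := by
        calc x < ((k:ℝ)+1) * ((2:ℝ)^n)⁻¹ := hx2
          _ = (k:ℝ) * ((2:ℝ)^n)⁻¹ + ((2:ℝ)^n)⁻¹ := by ring
      linarith
  · intro k hk k' hk' hne
    rw [Function.onFun, Set.disjoint_left]
    intro x hx hx'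
    have h1 : (k':ℝ) * ((2:ℝ)^n)⁻¹ < ((k:ℝ)+1) * ((2:ℝ)^n)⁻¹ := lt_trans hx'.1 hx.2
    have h2 : (k:ℝ) * ((2:ℝ)^n)⁻¹ < ((k':ℝ)+1) * ((2:ℝ)^n)⁻¹ := lt_trans hx.1 hx'.2
    have h1' : (k':ℝ) < (k:ℝ) + 1 := by
      have := lt_of_mul_lt_mul_right h1 hpos.le
      linarith
    have h2' : (k:ℝ) < (k':ℝ) + 1 := by
      have := lt_of_mul_lt_mul_right h2 hpos.le
      linarith
    have : k' < k + 1 := by exact_mod_cast h1'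
    have : k < k' + 1 := by exact_mod_cast h2'
    exact hne (by omega)



/-- estimate (9) in the proof of Theorem 1: if `E ⊆ 𝕋` is
closed with zero length and finite entropy, `G` is the family of maximal dyadic
arcs `J` with `2J ⊆ 𝕋 \ E`, and `F` is the family of dyadic arcs not contained
in any arc of `G`, then `Σ_{J ∈ F} |J| < ∞`. -/
theorem sum_of_bad_dyadic_arcs_finite
    (E : Set ℂ) (hE : IsClosed E) (hEc : E ⊆ circleSet)
    (hzero : circleMeasure E = 0) (hent : FiniteEntropy E) :
    (∑' p : {q : ℕ × ℕ // q.2 < 2 ^ q.1 ∧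
        ¬ ∃ r ∈ maxGoodDy E, dyadicArc q.1 q.2 ⊆ dyadicArc r.1 r.2},
      ENNReal.ofReal (dyL p.1.1)) < ⊤ := by
  classical
  by_cases hEmpty : E = ∅
  · subst hEmpty
    have hmax : ((0,0) : ℕ × ℕ) ∈ maxGoodDy (∅ : Set ℂ) := by
      constructor
      · exact ⟨by norm_num, by rw [Set.diff_empty]; exact doubleArc_subset_circle 0 0⟩
      · rintro ⟨m', j'⟩ hq hsub
        have hreal := (dyadic_subset_iff (by norm_num) hq.1).mp hsub
        rw [dI, dI, Set.Ico_subset_Ico_iff (dI_nonempty_lt 0 0)] at hreal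
        obtain ⟨ha, hb⟩ := hreal
        have hinv : (0:ℝ) < ((2:ℝ)^m')⁻¹ := by positivity
        have hj0 : j' = 0 := by
          have h0 : ((0:ℕ):ℝ) * ((2:ℝ)^0)⁻¹ = 0 := by norm_num
          rw [h0] at ha
          have : (j':ℝ) ≤ 0 := by nlinarith [ha]
          have : (j':ℝ) = 0 := le_antisymm this (by positivity)
          exact_mod_cast this
        subst hj0
        have hm0 : m' = 0 := by
          by_contra hc
          have hm1 : 1 ≤ m' := Nat.one_le_iff_ne_zero.mpr hc
          have h2m : (2:ℝ) ≤ (2:ℝ)^m' := by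
            calc (2:ℝ) = 2^1 := by norm_num
              _ ≤ 2^m' := pow_le_pow_right₀ (by norm_num) hm1
          have hb1 : (1:ℝ) ≤ ((2:ℝ)^m')⁻¹ := by
            push_cast at hb
            nlinarith [hb]
          have hmm : ((2:ℝ)^m')⁻¹ * (2:ℝ)^m' = 1 := inv_mul_cancel₀ (by positivity)
          nlinarith [hb1, h2m, hmm]
        subst hm0
        rfl
    have hall : ∀ q : {q : ℕ × ℕ // q.2 < 2 ^ q.1 ∧
        ¬ ∃ r ∈ maxGoodDy (∅ : Set ℂ), dyadicArc q.1 q.2 ⊆ dyadicArc r.1 r.2}, False := by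
      rintro ⟨q, hq1, hq2⟩
      apply hq2
      refine ⟨(0,0), hmax, ?_⟩
      rw [dyadic_subset_iff hq1 (by norm_num)]
      intro s hs
      have hmem := dI_subset_unit hq1 hs
      rw [dI]
      constructor
      · calc ((0:ℕ):ℝ) * ((2:ℝ)^0)⁻¹ = 0 := by norm_num
          _ ≤ s := hmem.1
      · calc s < 1 := hmem.2
          _ = (((0:ℕ):ℝ)+1) * ((2:ℝ)^0)⁻¹ := by norm_num
    haveI : IsEmpty {q : ℕ × ℕ // q.2 < 2 ^ q.1 ∧
        ¬ ∃ r ∈ maxGoodDy (∅ : Set ℂ), dyadicArc q.1 q.2 ⊆ dyadicArc r.1 r.2} := ⟨hall⟩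
    rw [tsum_empty]
    simp
  · obtain ⟨M, hM⟩ := hent
    have hBne : (Bset E).Nonempty := by
      obtain ⟨z, hz⟩ := Set.nonempty_iff_ne_empty.mpr hEmpty
      refine ⟨z.arg / (2*Real.pi), ?_⟩
      show fc _ ∈ E
      rw [← circle_eq_fc (hEc hz)]
      exact hz
    set S : Set (ℕ × ℕ) := {q : ℕ × ℕ | q.2 ∈ badK E q.1} with hS
    set g : ℕ × ℕ → ℝ≥0∞ := fun q => ENNReal.ofReal (dyL q.1) with hg
    have hlog2 : (0:ℝ) < Real.log 2 := Real.log_pos (by norm_num)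
    have hchain : (∑' p : {q : ℕ × ℕ // q.2 < 2 ^ q.1 ∧
        ¬ ∃ r ∈ maxGoodDy E, dyadicArc q.1 q.2 ⊆ dyadicArc r.1 r.2},
          ENNReal.ofReal (dyL p.1.1))
        ≤ ENNReal.ofReal 9 * 3 + ENNReal.ofReal ((Real.log 2)⁻¹) * ENNReal.ofReal (3 * M) := by
      calc (∑' p : {q : ℕ × ℕ // q.2 < 2 ^ q.1 ∧
            ¬ ∃ r ∈ maxGoodDy E, dyadicArc q.1 q.2 ⊆ dyadicArc r.1 r.2},
              ENNReal.ofReal (dyL p.1.1))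
          = ∑' q : ℕ × ℕ, Set.indicator {q : ℕ × ℕ | q.2 < 2 ^ q.1 ∧
              ¬ ∃ r ∈ maxGoodDy E, dyadicArc q.1 q.2 ⊆ dyadicArc r.1 r.2} g q :=
            tsum_subtype _ g
        _ ≤ ∑' q : ℕ × ℕ, Set.indicator S g q := by
            apply ENNReal.tsum_le_tsum
            apply Set.indicator_le_indicator_of_subset
            · rintro ⟨n, k⟩ ⟨hk, hbad⟩
              obtain ⟨s, hsE, h1, h2⟩ := bad_to_B E hk hbad
              exact mem_badK.mpr ⟨hk, s, hsE, h1, h2⟩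
            · exact fun _ => by simp
        _ = ∑' n : ℕ, ∑' k : ℕ, Set.indicator S g (n, k) :=
            ENNReal.tsum_prod (f := fun n k => Set.indicator S g (n, k))
        _ = ∑' n : ℕ, ((badK E n).card : ℝ≥0∞) * ENNReal.ofReal (((2:ℝ)^n)⁻¹) := by
            apply tsum_congr
            intro n
            rw [tsum_eq_sum (s := badK E n) ?_]
            · have hterm : ∀ k ∈ badK E n,
                  Set.indicator S g (n, k) = ENNReal.ofReal (((2:ℝ)^n)⁻¹) := by
                intro k hk
                rw [Set.indicator_of_mem (show (n,k) ∈ S from hk) g]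
                rfl
              rw [Finset.sum_congr rfl hterm, Finset.sum_const, nsmul_eq_mul]
            · intro b hb
              exact Set.indicator_of_notMem (show (n,b) ∉ S from hb) g
        _ ≤ ∑' n : ℕ, volume {x : ℝ | x ∈ Set.Icc (0:ℝ) 1 ∧
              ∃ s ∈ Bset E, |x - s| ≤ 2 * ((2:ℝ)^n)⁻¹} :=
            ENNReal.tsum_le_tsum (fun n => count_le_thick E n)
        _ ≤ ∑' n : ℕ, ∑' p : ↥(gapSet E),
              volume (Set.Ioo (p : ℝ × ℝ).1 (p : ℝ × ℝ).2 ∩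
                (Set.Iic ((p : ℝ × ℝ).1 + 2 * ((2:ℝ)^n)⁻¹) ∪
                  Set.Ici ((p : ℝ × ℝ).2 - 2 * ((2:ℝ)^n)⁻¹))) :=
            ENNReal.tsum_le_tsum (fun n => thick_le hE hBne hzero)
        _ = ∑' p : ↥(gapSet E), ∑' n : ℕ,
              volume (Set.Ioo (p : ℝ × ℝ).1 (p : ℝ × ℝ).2 ∩
                (Set.Iic ((p : ℝ × ℝ).1 + 2 * ((2:ℝ)^n)⁻¹) ∪
                  Set.Ici ((p : ℝ × ℝ).2 - 2 * ((2:ℝ)^n)⁻¹))) := ENNReal.tsum_comm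
        _ ≤ ∑' p : ↥(gapSet E),
              (ENNReal.ofReal (9 * ((p : ℝ × ℝ).2 - (p : ℝ × ℝ).1)) +
                ENNReal.ofReal ((Real.log 2)⁻¹ * (((p : ℝ × ℝ).2 - (p : ℝ × ℝ).1) *
                  Real.log (1 / ((p : ℝ × ℝ).2 - (p : ℝ × ℝ).1))))) := by
            apply ENNReal.tsum_le_tsum
            intro p
            have hp := p.2
            have hl0 : (0:ℝ) < (p : ℝ × ℝ).2 - (p : ℝ × ℝ).1 := by linarith [hp.2.2.1]
            have hl1 : (p : ℝ × ℝ).2 - (p : ℝ × ℝ).1 ≤ 1 := gap_le_one hp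
            calc (∑' n : ℕ, volume (Set.Ioo (p : ℝ × ℝ).1 (p : ℝ × ℝ).2 ∩
                  (Set.Iic ((p : ℝ × ℝ).1 + 2 * ((2:ℝ)^n)⁻¹) ∪
                    Set.Ici ((p : ℝ × ℝ).2 - 2 * ((2:ℝ)^n)⁻¹))))
                ≤ ∑' n : ℕ, min (ENNReal.ofReal ((p : ℝ × ℝ).2 - (p : ℝ × ℝ).1))
                    (ENNReal.ofReal (4 * ((2:ℝ)^n)⁻¹)) := by
                  apply ENNReal.tsum_le_tsum
                  intro n
                  have := Gp_le_min (a := (p : ℝ × ℝ).1) (b := (p : ℝ × ℝ).2)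
                    (t := 2 * ((2:ℝ)^n)⁻¹) (by linarith : (p : ℝ × ℝ).1 ≤ (p : ℝ × ℝ).2)
                    (by positivity)
                  rw [show (4:ℝ) * ((2:ℝ)^n)⁻¹ = 2 * (2 * ((2:ℝ)^n)⁻¹) by ring]
                  exact this
              _ ≤ _ := geom_sum_bound hl0 hl1
        _ ≤ ENNReal.ofReal 9 * 3 + ENNReal.ofReal ((Real.log 2)⁻¹) * ENNReal.ofReal (3 * M) := by
            rw [ENNReal.tsum_add]
            apply add_le_add
            · have heq : ∀ p : ↥(gapSet E),
                  ENNReal.ofReal (9 * ((p : ℝ × ℝ).2 - (p : ℝ × ℝ).1))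
                    = ENNReal.ofReal 9 * ENNReal.ofReal ((p : ℝ × ℝ).2 - (p : ℝ × ℝ).1) := by
                intro p
                rw [ENNReal.ofReal_mul (by norm_num)]
              rw [tsum_congr heq, ENNReal.tsum_mul_left]
              exact mul_le_mul_right (tsum_len_le E) _
            · have heq : ∀ p : ↥(gapSet E),
                  ENNReal.ofReal ((Real.log 2)⁻¹ * (((p : ℝ × ℝ).2 - (p : ℝ × ℝ).1) *
                      Real.log (1 / ((p : ℝ × ℝ).2 - (p : ℝ × ℝ).1))))
                    = ENNReal.ofReal ((Real.log 2)⁻¹) *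
                      ENNReal.ofReal (((p : ℝ × ℝ).2 - (p : ℝ × ℝ).1) *
                        Real.log (1 / ((p : ℝ × ℝ).2 - (p : ℝ × ℝ).1))) := by
                intro p
                rw [ENNReal.ofReal_mul (by positivity)]
              rw [tsum_congr heq, ENNReal.tsum_mul_left]
              exact mul_le_mul_right (tsum_entropy_le M hM) _
    apply lt_of_le_of_lt hchain
    rw [lt_top_iff_ne_top]
    apply ENNReal.add_ne_top.mpr
    constructor
    · exact ENNReal.mul_ne_top ENNReal.ofReal_ne_top (by norm_num)
    · exact ENNReal.mul_ne_top ENNReal.ofReal_ne_top ENNReal.ofReal_ne_top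


end WEPPaper
end
end
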